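/- arXiv:1803.07763 — 6 statements merged into one kernel-verified Lean document; each statement's English description precedes it below -/
import Mathlib

section
/- For any δ > 0, any integer k ∈ {1, …, d}, any k-dimensional orthogonal projection Π_k of ℝ^d, and any θ* ∈ E, the localized Gaussian width satisfies G(E_{θ*} ∩ B(δ)) ≤ δ·√k + inf_{γ ∈ Γ(θ*, δ, Π_k)} √(Σ_{i=1}^d γ_i). -/
open MeasureTheory ProbabilityTheory Metric Set Filter
open scoped BigOperators ENNReal NNReal RealInnerProductSpace Classical

noncomputable section

namespace GaussKol

/-- The standard Gaussian measure on `EuclideanSpace ℝ (Fin d)`. -/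
def stdGaussian (d : ℕ) : Measure (EuclideanSpace ℝ (Fin d)) :=
  (Measure.pi fun _ : Fin d => gaussianReal 0 1).map
    (MeasurableEquiv.toLp 2 (Fin d → ℝ))

/-- The Gaussian width of a set `S ⊆ ℝ^d`. -/
def gaussianWidth {d : ℕ} (S : Set (EuclideanSpace ℝ (Fin d))) : ℝ :=
  ∫ w, (⨆ u ∈ S, ⟪w, u⟫) ∂(stdGaussian d)

/-- The ellipse with aspect ratios `μ`. -/
def ellipse {d : ℕ} (μ : Fin d → ℝ) : Set (EuclideanSpace ℝ (Fin d)) :=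
  {θ | ∑ j, θ j ^ 2 / μ j ≤ 1}

/-- The squared elliptical norm. -/
def enormSq {d : ℕ} (μ : Fin d → ℝ) (θ : EuclideanSpace ℝ (Fin d)) : ℝ :=
  ∑ j, θ j ^ 2 / μ j

/-- The recentered ellipse `E_{θ*}`. -/
def shiftedEllipse {d : ℕ} (μ : Fin d → ℝ) (θs : EuclideanSpace ℝ (Fin d)) :
    Set (EuclideanSpace ℝ (Fin d)) :=
  (fun θ => θ - θs) '' ellipse μ

/-- Orthogonal projection onto a subspace, as a self-map of `ℝ^d`. -/
def projK {d : ℕ} (K : Submodule ℝ (EuclideanSpace ℝ (Fin d)))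
    (x : EuclideanSpace ℝ (Fin d)) : EuclideanSpace ℝ (Fin d) :=
  (K.orthogonalProjectionOnto x : EuclideanSpace ℝ (Fin d))

/-- The Kolmogorov `k`-width of a set `S ⊆ ℝ^d`. -/
def kolWidth {d : ℕ} (k : ℕ) (S : Set (EuclideanSpace ℝ (Fin d))) : ℝ :=
  ⨅ K : {K : Submodule ℝ (EuclideanSpace ℝ (Fin d)) // Module.finrank ℝ K = k},
    ⨆ θ ∈ S, ‖θ - projK K.1 θ‖

/-- The critical dimension `k(θ*, δ)`. -/
def critDim {d : ℕ} (η : ℝ) (μ : Fin d → ℝ) (θs : EuclideanSpace ℝ (Fin d)) (δ : ℝ) : ℕ :=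
  sInf {k : ℕ | 1 ≤ k ∧ k ≤ d ∧
    kolWidth k (shiftedEllipse μ θs ∩ closedBall 0 ((1 - η) * δ)) ≤ (9 / 10) * δ}

/-- The set `Γ(θ*, δ, Π_k)`. -/
def Gam {d : ℕ} (μ : Fin d → ℝ) (θs : EuclideanSpace ℝ (Fin d)) (δ : ℝ)
    (K : Submodule ℝ (EuclideanSpace ℝ (Fin d))) : Set (Fin d → ℝ) :=
  {γ | (∀ i, 0 < γ i) ∧
    ∀ Δ ∈ shiftedEllipse μ θs ∩ closedBall 0 δ,
      ∑ i, (Δ i - projK K Δ i) ^ 2 / γ i ≤ 1}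

/-- The function `Φ`. -/
def Phi {d : ℕ} (η : ℝ) (μ : Fin d → ℝ) (θs : EuclideanSpace ℝ (Fin d)) (δ : ℝ) : ℝ :=
  if ‖θs‖ / (1 - η) < δ then 1
  else min 1 (sInf {r : ℝ | 0 ≤ r ∧
    δ ^ 2 ≤ ((1 - η) ^ 2)⁻¹ * ∑ i, r ^ 2 * θs i ^ 2 / (r + μ i) ^ 2})

/-- `Φ⁻¹(x)`: the largest `δ > 0` with `Φ(δ) ≤ x` (equal to `∞` when unbounded). -/
def PhiInv {d : ℕ} (η : ℝ) (μ : Fin d → ℝ) (θs : EuclideanSpace ℝ (Fin d)) (x : ℝ) : ℝ≥0∞ :=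
  ⨆ (δ : ℝ) (_ : 0 < δ ∧ Phi η μ θs δ ≤ x), ENNReal.ofReal δ

/-- The `ε`-packing number of `S` in Euclidean distance. -/
def packingNumber {d : ℕ} (ε : ℝ) (S : Set (EuclideanSpace ℝ (Fin d))) : ℕ :=
  sSup {n : ℕ | ∃ T : Finset (EuclideanSpace ℝ (Fin d)),
    ↑T ⊆ S ∧ (∀ x ∈ T, ∀ y ∈ T, x ≠ y → ε < dist x y) ∧ T.card = n}

/-- Regularity of the ellipse at `θ*`, with explicit constant `c`. -/
def regularAtWith {d : ℕ} (η : ℝ) (μ : Fin d → ℝ) (θs : EuclideanSpace ℝ (Fin d))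
    (c : ℝ) : Prop :=
  ∀ δ : ℝ, 0 < δ →
    ∃ K : Submodule ℝ (EuclideanSpace ℝ (Fin d)),
      Module.finrank ℝ K = critDim η μ θs δ ∧
      (⨆ θ ∈ shiftedEllipse μ θs ∩ closedBall 0 ((1 - η) * δ), ‖θ - projK K θ‖)
        ≤ kolWidth (critDim η μ θs δ) (shiftedEllipse μ θs ∩ closedBall 0 ((1 - η) * δ)) ∧
      sInf ((fun γ : Fin d → ℝ => ∑ i, γ i) '' Gam μ θs δ K)
        ≤ c * δ ^ 2 * critDim η μ θs δ

/-- The minimax risk of estimation over the ellipse with noise level `σ`. -/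
def minimaxRisk (d : ℕ) (μ : Fin d → ℝ) (σ : ℝ) : ℝ :=
  ⨅ est : {f : EuclideanSpace ℝ (Fin d) → EuclideanSpace ℝ (Fin d) // Measurable f},
    ⨆ θs ∈ ellipse μ, ∫ w, ‖est.1 (θs + σ • w) - θs‖ ^ 2 ∂(stdGaussian d)

end GaussKol

open GaussKol

section GKAux

open Real

namespace GKAux

/-! ### One-dimensional Gaussian facts -/

lemma pdf_eq (x : ℝ) :
    gaussianPDFReal 0 1 x = (Real.sqrt (2*π))⁻¹ * Real.exp (-(1/2) * x^2) := by
  simp only [gaussianPDFReal, NNReal.coe_one, mul_one, sub_zero]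
  congr 2
  ring

lemma pdf_even (x : ℝ) : gaussianPDFReal 0 1 (-x) = gaussianPDFReal 0 1 x := by
  rw [pdf_eq, pdf_eq]; ring_nf

lemma integral_gaussianReal01 (f : ℝ → ℝ) :
    ∫ x, f x ∂(gaussianReal 0 1) = ∫ x, gaussianPDFReal 0 1 x * f x := by
  rw [gaussianReal_of_var_ne_zero _ one_ne_zero]
  have h : gaussianPDF 0 1 = fun x => ((gaussianPDFReal 0 1 x).toNNReal : ℝ≥0∞) := rfl
  rw [h, integral_withDensity_eq_integral_smul
    ((measurable_gaussianPDFReal 0 1).real_toNNReal) f]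
  refine integral_congr_ae (Filter.Eventually.of_forall fun x => ?_)
  simp [NNReal.smul_def, Real.coe_toNNReal _ (gaussianPDFReal_nonneg 0 1 x)]

lemma integrable_gaussianReal01_iff {f : ℝ → ℝ} :
    Integrable f (gaussianReal 0 1) ↔
      Integrable (fun x => f x * gaussianPDFReal 0 1 x) volume := by
  rw [gaussianReal_of_var_ne_zero _ one_ne_zero,
    integrable_withDensity_iff (measurable_gaussianPDF 0 1)
      (Filter.Eventually.of_forall fun x => ENNReal.ofReal_lt_top)]
  have h : (fun x => f x * (gaussianPDF 0 1 x).toReal)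
      = fun x => f x * gaussianPDFReal 0 1 x := by
    funext x
    rw [gaussianPDF, ENNReal.toReal_ofReal (gaussianPDFReal_nonneg 0 1 x)]
  rw [h]

lemma integrable_pow_mul_pdf (n : ℕ) :
    Integrable (fun x : ℝ => x ^ n * gaussianPDFReal 0 1 x) volume := by
  have h := (integrable_rpow_mul_exp_neg_mul_sq (b := 1/2) (by norm_num)
    (s := (n : ℝ)) (lt_of_lt_of_le neg_one_lt_zero (Nat.cast_nonneg n))).const_mul
    ((Real.sqrt (2*π))⁻¹)
  refine h.congr (Filter.Eventually.of_forall fun x => ?_)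
  simp only [pdf_eq, Real.rpow_natCast]
  ring

lemma integral_mul_pdf_zero :
    ∫ x : ℝ, x * gaussianPDFReal 0 1 x = 0 := by
  have h : ∫ x : ℝ, (fun y : ℝ => y * gaussianPDFReal 0 1 y) (-x)
      = ∫ x : ℝ, x * gaussianPDFReal 0 1 x :=
    integral_neg_eq_self (fun y : ℝ => y * gaussianPDFReal 0 1 y) volume
  have h2 : ∫ x : ℝ, (fun y : ℝ => y * gaussianPDFReal 0 1 y) (-x)
      = - ∫ x : ℝ, x * gaussianPDFReal 0 1 x := by
    rw [← integral_neg]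
    exact integral_congr_ae (Filter.Eventually.of_forall fun x => by
      simp only [pdf_even]; ring)
  linarith [h, h2]

lemma sqrt_four : Real.sqrt 4 = 2 := by
  rw [show (4:ℝ) = 2^2 by norm_num, Real.sqrt_sq (by norm_num)]

lemma rpow_half_aux : ((1:ℝ)/2) ^ (-(3:ℝ)/2) = 2 * Real.sqrt 2 := by
  have hpos : (0:ℝ) < (1/2:ℝ) ^ (-(3:ℝ)/2) := Real.rpow_pos_of_pos (by norm_num) _
  have hsq : (((1:ℝ)/2) ^ (-(3:ℝ)/2)) ^ 2 = 8 := by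
    rw [← Real.rpow_natCast (((1:ℝ)/2) ^ (-(3:ℝ)/2)) 2, ← Real.rpow_mul (by norm_num)]
    rw [show (-(3:ℝ)/2) * ((2:ℕ):ℝ) = (-3 : ℝ) by push_cast; ring]
    rw [Real.rpow_neg (by norm_num), show (3:ℝ) = ((3:ℕ):ℝ) by norm_num,
      Real.rpow_natCast]
    norm_num
  have h8 : Real.sqrt 8 = 2 * Real.sqrt 2 := by
    rw [show (8:ℝ) = 4 * 2 by norm_num, Real.sqrt_mul (by norm_num), sqrt_four]
  rw [← Real.sqrt_sq hpos.le, hsq, h8]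

lemma gamma_three_half : Real.Gamma ((3:ℝ)/2) = Real.sqrt π / 2 := by
  rw [show (3:ℝ)/2 = 1/2 + 1 by norm_num, Real.Gamma_add_one (by norm_num),
    Real.Gamma_one_half_eq]
  ring

lemma integral_sq_mul_pdf_one :
    ∫ x : ℝ, x ^ 2 * gaussianPDFReal 0 1 x = 1 := by
  have h2 : ∫ x : ℝ, x ^ 2 * gaussianPDFReal 0 1 x
      = 2 * ∫ x in Set.Ioi (0:ℝ), x ^ 2 * gaussianPDFReal 0 1 x := by
    have habs := integral_comp_abs (f := fun t : ℝ => t ^ 2 * gaussianPDFReal 0 1 t)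
    rw [← habs]
    refine integral_congr_ae (Filter.Eventually.of_forall fun x => ?_)
    show x ^ 2 * gaussianPDFReal 0 1 x = |x| ^ 2 * gaussianPDFReal 0 1 |x|
    rcases abs_cases x with ⟨h, _⟩ | ⟨h, _⟩ <;> rw [h] <;>
      simp only [pdf_even, neg_sq]
  have h3 : ∫ x in Set.Ioi (0:ℝ), x ^ 2 * gaussianPDFReal 0 1 x
      = (Real.sqrt (2*π))⁻¹ * ∫ x in Set.Ioi (0:ℝ),
          x ^ (2:ℝ) * Real.exp (-(1/2) * x ^ (2:ℝ)) := by
    rw [← integral_const_mul]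
    refine setIntegral_congr_fun measurableSet_Ioi (fun x _ => ?_)
    rw [show (2:ℝ) = ((2:ℕ):ℝ) by norm_num, Real.rpow_natCast, pdf_eq]
    ring
  have h4 : ∫ x in Set.Ioi (0:ℝ), x ^ (2:ℝ) * Real.exp (-(1/2) * x ^ (2:ℝ))
      = ((1:ℝ)/2) ^ (-(3:ℝ)/2) * (1/2) * Real.Gamma ((3:ℝ)/2) := by
    have := integral_rpow_mul_exp_neg_mul_rpow (p := 2) (q := 2) (b := 1/2)
      (by norm_num) (by norm_num) (by norm_num)
    rw [this]
    norm_num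
  rw [h2, h3, h4, rpow_half_aux, gamma_three_half]
  have hs : Real.sqrt (2*π) = Real.sqrt 2 * Real.sqrt π := Real.sqrt_mul (by norm_num) _
  have hne : Real.sqrt 2 * Real.sqrt π ≠ 0 := by
    have := Real.sqrt_pos.mpr pi_pos
    have h2' := Real.sqrt_pos.mpr (show (0:ℝ) < 2 by norm_num)
    positivity
  rw [hs]
  field_simp

lemma int_pow_gauss (n : ℕ) : Integrable (fun x : ℝ => x ^ n) (gaussianReal 0 1) :=
  integrable_gaussianReal01_iff.mpr (integrable_pow_mul_pdf n)

lemma gauss_mean : ∫ x : ℝ, x ^ 1 ∂(gaussianReal 0 1) = 0 := by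
  rw [integral_gaussianReal01]
  simpa [mul_comm] using integral_mul_pdf_zero

lemma gauss_sq : ∫ x : ℝ, x ^ 2 ∂(gaussianReal 0 1) = 1 := by
  rw [integral_gaussianReal01]
  simpa [mul_comm] using integral_sq_mul_pdf_one

/-! ### The product Gaussian measure on `Fin d → ℝ` -/

def nu (d : ℕ) : Measure (Fin d → ℝ) := Measure.pi fun _ => gaussianReal 0 1

instance (d : ℕ) : IsProbabilityMeasure (nu d) := by
  unfold nu; infer_instance

lemma pi_integrable {d : ℕ} (f : Fin d → ℝ → ℝ)
    (hf : ∀ i, Integrable (f i) (gaussianReal 0 1)) :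
    Integrable (fun x : Fin d → ℝ => ∏ i, f i (x i)) (nu d) := by
  letI : MeasureSpace ℝ := ⟨gaussianReal 0 1⟩
  haveI : SigmaFinite (volume : Measure ℝ) :=
    inferInstanceAs (SigmaFinite (gaussianReal 0 1))
  exact MeasureTheory.Integrable.fintype_prod (f := f) hf

lemma pi_integral {d : ℕ} (f : Fin d → ℝ → ℝ) :
    ∫ x, ∏ i, f i (x i) ∂(nu d) = ∏ i, ∫ y, f i y ∂(gaussianReal 0 1) := by
  letI : MeasureSpace ℝ := ⟨gaussianReal 0 1⟩
  haveI : SigmaFinite (volume : Measure ℝ) :=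
    inferInstanceAs (SigmaFinite (gaussianReal 0 1))
  exact integral_fintype_prod_eq_prod f

lemma prod_coord {d : ℕ} (i j : Fin d) (x : Fin d → ℝ) :
    (∏ l, x l ^ (((if l = i then 1 else 0) + (if l = j then 1 else 0)) : ℕ))
      = x i * x j := by
  simp_rw [pow_add, Finset.prod_mul_distrib]
  congr 1 <;>
  · simp_rw [pow_ite, pow_one, pow_zero]
    simp

lemma integrable_coord_mul {d : ℕ} (i j : Fin d) :
    Integrable (fun x : Fin d → ℝ => x i * x j) (nu d) := by
  have h := pi_integrable
    (fun l t => t ^ (((if l = i then 1 else 0) + (if l = j then 1 else 0)) : ℕ))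
    (fun l => int_pow_gauss _)
  exact h.congr (Filter.Eventually.of_forall fun x => prod_coord i j x)

lemma integral_coord_mul {d : ℕ} (i j : Fin d) :
    ∫ x, x i * x j ∂(nu d) = if i = j then 1 else 0 := by
  have h : (fun x : Fin d → ℝ => x i * x j) = fun x : Fin d → ℝ =>
      ∏ l, x l ^ (((if l = i then 1 else 0) + (if l = j then 1 else 0)) : ℕ) :=
    funext fun x => (prod_coord i j x).symm
  rw [h, pi_integral
    (fun l t => t ^ (((if l = i then 1 else 0) + (if l = j then 1 else 0)) : ℕ))]
  by_cases hij : i = j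
  · subst hij
    simp only [if_pos rfl]
    refine Finset.prod_eq_one fun l _ => ?_
    by_cases hl : l = i
    · subst hl
      simpa using gauss_sq
    · simp [hl]
  · rw [if_neg hij]
    refine Finset.prod_eq_zero (Finset.mem_univ i) ?_
    rw [if_pos rfl, if_neg hij]
    simpa using gauss_mean

lemma integrable_lin_sq {d : ℕ} (v : Fin d → ℝ) :
    Integrable (fun x : Fin d → ℝ => (∑ i, v i * x i) ^ 2) (nu d) := by
  have hexp : ∀ x : Fin d → ℝ,
      (∑ i, v i * x i) ^ 2 = ∑ i, ∑ j, (v i * v j) * (x i * x j) := by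
    intro x
    rw [sq, Finset.sum_mul_sum]
    exact Finset.sum_congr rfl fun i _ => Finset.sum_congr rfl fun j _ => by ring
  have h : Integrable (fun x : Fin d → ℝ => ∑ i, ∑ j, (v i * v j) * (x i * x j)) (nu d) :=
    integrable_finset_sum _ fun i _ => integrable_finset_sum _ fun j _ =>
      (integrable_coord_mul i j).const_mul _
  exact h.congr (Filter.Eventually.of_forall fun x => (hexp x).symm)

lemma integral_lin_sq {d : ℕ} (v : Fin d → ℝ) :
    ∫ x, (∑ i, v i * x i) ^ 2 ∂(nu d) = ∑ i, v i ^ 2 := by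
  have hexp : (fun x : Fin d → ℝ => (∑ i, v i * x i) ^ 2)
      = fun x => ∑ i, ∑ j, (v i * v j) * (x i * x j) := by
    funext x
    rw [sq, Finset.sum_mul_sum]
    exact Finset.sum_congr rfl fun i _ => Finset.sum_congr rfl fun j _ => by ring
  rw [hexp, integral_finset_sum _ fun i _ => integrable_finset_sum _ fun j _ =>
      (integrable_coord_mul i j).const_mul _]
  have h : ∀ i : Fin d, ∫ x, (∑ j, (v i * v j) * (x i * x j)) ∂(nu d) = v i ^ 2 := by
    intro i
    rw [integral_finset_sum _ fun j _ => (integrable_coord_mul i j).const_mul _]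
    have h2 : ∀ j : Fin d, ∫ x, (v i * v j) * (x i * x j) ∂(nu d)
        = if i = j then v i ^ 2 else 0 := by
      intro j
      rw [integral_const_mul, integral_coord_mul]
      by_cases hij : i = j
      · subst hij; simp [sq]
      · simp [hij]
    simp_rw [h2]
    simp
  simp_rw [h]

lemma integrable_coord_sq {d : ℕ} (i : Fin d) :
    Integrable (fun x : Fin d → ℝ => x i ^ 2) (nu d) :=
  (integrable_coord_mul i i).congr (Filter.Eventually.of_forall fun x => (pow_two (x i)).symm)

lemma integral_coord_sq {d : ℕ} (i : Fin d) :
    ∫ x, x i ^ 2 ∂(nu d) = 1 := by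
  have h : (fun x : Fin d → ℝ => x i ^ 2) = fun x : Fin d → ℝ => x i * x i := by
    funext x; rw [sq]
  rw [h, integral_coord_mul, if_pos rfl]

/-! ### Second-moment bound on first moments -/

lemma integral_le_sqrt_moment {d : ℕ} {X : (Fin d → ℝ) → ℝ} {m : ℝ}
    (hmeas : Measurable X) (hnonneg : ∀ x, 0 ≤ X x)
    (hint : Integrable (fun x => X x ^ 2) (nu d))
    (hm : ∫ x, X x ^ 2 ∂(nu d) = m) :
    ∫ x, X x ∂(nu d) ≤ Real.sqrt m := by
  have hmem : MemLp X 2 (nu d) :=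
    (memLp_two_iff_integrable_sq hmeas.aestronglyMeasurable).mpr hint
  have hintX : Integrable X (nu d) := hmem.integrable one_le_two
  have hvar := variance_nonneg X (nu d)
  rw [variance_eq_sub hmem] at hvar
  have hsq : (∫ x, X x ∂(nu d)) ^ 2 ≤ m := by
    have hXsq : (nu d)[X ^ 2] = m := by
      rw [← hm]
      exact integral_congr_ae (Filter.Eventually.of_forall fun x => by simp [sq])
    have : (nu d)[X] = ∫ x, X x ∂(nu d) := rfl
    nlinarith [hvar]
  exact Real.le_sqrt_of_sq_le hsq

lemma integrable_of_sq {d : ℕ} {X : (Fin d → ℝ) → ℝ} (hmeas : Measurable X)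
    (hint : Integrable (fun x => X x ^ 2) (nu d)) : Integrable X (nu d) :=
  ((memLp_two_iff_integrable_sq hmeas.aestronglyMeasurable).mpr hint).integrable one_le_two

/-! ### Euclidean geometry facts -/

lemma euc_norm_sq {d : ℕ} (x : EuclideanSpace ℝ (Fin d)) : ‖x‖ ^ 2 = ∑ i, x i ^ 2 := by
  rw [EuclideanSpace.norm_eq, Real.sq_sqrt (by positivity)]
  simp [sq_abs]

lemma real_inner_sum {d : ℕ} (w u : EuclideanSpace ℝ (Fin d)) : ⟪w, u⟫ = ∑ i, w i * u i := by
  simp [PiLp.inner_apply, RCLike.inner_apply, conj_trivial, mul_comm]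

lemma proj_pyth {d : ℕ} (K : Submodule ℝ (EuclideanSpace ℝ (Fin d)))
    (w : EuclideanSpace ℝ (Fin d)) :
    ‖projK K w‖ ^ 2 + ‖w - projK K w‖ ^ 2 = ‖w‖ ^ 2 := by
  have hinner : ⟪projK K w, w - projK K w⟫ = 0 := by
    have h := Submodule.sub_starProjection_mem_orthogonal (K := K) w
    exact (Submodule.mem_orthogonal K _).mp h _ (K.orthogonalProjectionOnto w).2
  have h := norm_add_sq_real (projK K w) (w - projK K w)
  rw [hinner] at h
  have h2 : projK K w + (w - projK K w) = w := by abel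
  rw [h2] at h
  linarith

lemma norm_proj_le {d : ℕ} (K : Submodule ℝ (EuclideanSpace ℝ (Fin d)))
    (w : EuclideanSpace ℝ (Fin d)) : ‖projK K w‖ ≤ ‖w‖ := by
  have h := proj_pyth K w
  nlinarith [norm_nonneg (projK K w), norm_nonneg w, sq_nonneg ‖w - projK K w‖,
    norm_nonneg (w - projK K w)]

lemma norm_sub_proj_le {d : ℕ} (K : Submodule ℝ (EuclideanSpace ℝ (Fin d)))
    (w : EuclideanSpace ℝ (Fin d)) : ‖w - projK K w‖ ≤ ‖w‖ := by
  have h := proj_pyth K w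
  nlinarith [norm_nonneg (projK K w), norm_nonneg w, sq_nonneg ‖projK K w‖,
    norm_nonneg (w - projK K w)]

lemma inner_proj_eq {d : ℕ} (K : Submodule ℝ (EuclideanSpace ℝ (Fin d)))
    (v : EuclideanSpace ℝ (Fin d)) (u : EuclideanSpace ℝ (Fin d)) (hu : u ∈ K) :
    ⟪u, projK K v⟫ = ⟪u, v⟫ := by
  have h : ⟪v - projK K v, u⟫ = 0 := Submodule.starProjection_inner_eq_zero v u hu
  have h' : ⟪u, v - projK K v⟫ = 0 := by rwa [real_inner_comm] at h
  rw [inner_sub_right] at h'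
  linarith

lemma proj_norm_sq_expansion {d : ℕ} (K : Submodule ℝ (EuclideanSpace ℝ (Fin d)))
    (v : EuclideanSpace ℝ (Fin d)) :
    ‖projK K v‖ ^ 2 = ∑ j : Fin (Module.finrank ℝ K),
      (⟪((stdOrthonormalBasis ℝ K j : K) : EuclideanSpace ℝ (Fin d)), v⟫) ^ 2 := by
  set b := stdOrthonormalBasis ℝ K
  have h1 : ‖projK K v‖ = ‖K.orthogonalProjectionOnto v‖ := by
    rw [projK, Submodule.coe_norm]
  have h2 : ‖K.orthogonalProjectionOnto v‖ = ‖b.repr (K.orthogonalProjectionOnto v)‖ :=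
    (b.repr.norm_map _).symm
  have h3 : ‖b.repr (K.orthogonalProjectionOnto v)‖ ^ 2
      = ∑ j, (b.repr (K.orthogonalProjectionOnto v) j) ^ 2 := euc_norm_sq _
  rw [h1, h2, h3]
  refine Finset.sum_congr rfl fun j _ => ?_
  rw [b.repr_apply_apply, Submodule.coe_inner]
  rw [show ((K.orthogonalProjectionOnto v : K) : EuclideanSpace ℝ (Fin d)) = projK K v from rfl]
  rw [inner_proj_eq K v _ (b j).2]

end GKAux

end GKAux


/-- **Theorem 1 (upper bound on the localized Gaussian width).**
For any `δ > 0`, any `k ∈ {1, …, d}`, any `k`-dimensional orthogonal projection (given by a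
`k`-dimensional subspace `K`), and any `θ* ∈ E`,
`G(E_{θ*} ∩ B(δ)) ≤ δ √k + inf_{γ ∈ Γ(θ*, δ, Π_k)} √(∑ i γ i)`. -/
theorem localized_gaussian_width_upper_bound
    {d : ℕ} (μ : Fin d → ℝ) (hμpos : ∀ i, 0 < μ i)
    (hμmono : ∀ i j : Fin d, i ≤ j → μ j ≤ μ i)
    (δ : ℝ) (hδ : 0 < δ)
    (k : ℕ) (hk1 : 1 ≤ k) (hkd : k ≤ d)
    (K : Submodule ℝ (EuclideanSpace ℝ (Fin d))) (hK : Module.finrank ℝ K = k)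
    (θs : EuclideanSpace ℝ (Fin d)) (hθs : θs ∈ ellipse μ) :
    gaussianWidth (shiftedEllipse μ θs ∩ closedBall 0 δ)
      ≤ δ * Real.sqrt k +
        sInf ((fun γ : Fin d → ℝ => Real.sqrt (∑ i, γ i)) '' Gam μ θs δ K) := by
  classical
  set S : Set (EuclideanSpace ℝ (Fin d)) := shiftedEllipse μ θs ∩ closedBall 0 δ with hSdef
  have h0S : (0 : EuclideanSpace ℝ (Fin d)) ∈ S := by
    constructor
    · exact ⟨θs, hθs, sub_self θs⟩
    · simpa using hδ.le
  -- `Γ` is nonempty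
  have hγ0 : (fun _ : Fin d => δ ^ 2) ∈ Gam μ θs δ K := by
    refine ⟨fun i => by positivity, fun Δ hΔ => ?_⟩
    have hΔnorm : ‖Δ‖ ≤ δ := by
      have := hΔ.2
      rwa [Metric.mem_closedBall, dist_zero_right] at this
    have hsub : ‖Δ - projK K Δ‖ ≤ δ := le_trans (GKAux.norm_sub_proj_le K Δ) hΔnorm
    have hsum : ∑ i, (Δ i - projK K Δ i) ^ 2 / δ ^ 2 = ‖Δ - projK K Δ‖ ^ 2 / δ ^ 2 := by
      rw [GKAux.euc_norm_sq, Finset.sum_div]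
      rfl
    rw [hsum, div_le_one (by positivity)]
    nlinarith [norm_nonneg (Δ - projK K Δ)]
  -- key bound for each γ in Γ
  have key : ∀ γ ∈ Gam μ θs δ K,
      gaussianWidth S ≤ δ * Real.sqrt k + Real.sqrt (∑ i, γ i) := by
    rintro γ ⟨hγpos, hγbd⟩
    set g : EuclideanSpace ℝ (Fin d) → ℝ :=
      fun w => δ * ‖projK K w‖ + Real.sqrt (∑ i, γ i * w i ^ 2) with hgdef
    have hg0 : ∀ w, 0 ≤ g w := by
      intro w
      have h1 : (0:ℝ) ≤ δ * ‖projK K w‖ := by positivity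
      have h2 : (0:ℝ) ≤ Real.sqrt (∑ i, γ i * w i ^ 2) := Real.sqrt_nonneg _
      simp only [hgdef]
      linarith
    have hpt : ∀ w u, u ∈ S → ⟪w, u⟫ ≤ g w := by
      intro w u hu
      have hu_ball : ‖u‖ ≤ δ := by
        have := hu.2
        rwa [Metric.mem_closedBall, dist_zero_right] at this
      have hdec : ⟪w, u⟫ = ⟪w, projK K u⟫ + ⟪w, u - projK K u⟫ := by
        rw [← inner_add_right]
        congr 1
        abel
      have h1 : ⟪w, projK K u⟫ ≤ δ * ‖projK K w‖ := by
        have e1 : ⟪w, projK K u⟫ = ⟪projK K w, projK K u⟫ := by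
          have h := GKAux.inner_proj_eq K w (projK K u) (K.orthogonalProjectionOnto u).2
          calc ⟪w, projK K u⟫ = ⟪projK K u, w⟫ := real_inner_comm _ _
            _ = ⟪projK K u, projK K w⟫ := h.symm
            _ = ⟪projK K w, projK K u⟫ := real_inner_comm _ _
        rw [e1]
        calc ⟪projK K w, projK K u⟫ ≤ ‖projK K w‖ * ‖projK K u‖ := real_inner_le_norm _ _
          _ ≤ ‖projK K w‖ * δ :=
            mul_le_mul_of_nonneg_left ((GKAux.norm_proj_le K u).trans hu_ball)
              (norm_nonneg _)
          _ = δ * ‖projK K w‖ := mul_comm _ _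
      have h2 : ⟪w, u - projK K u⟫ ≤ Real.sqrt (∑ i, γ i * w i ^ 2) := by
        rw [GKAux.real_inner_sum]
        set a : Fin d → ℝ := fun i => w i * Real.sqrt (γ i) with ha
        set bb : Fin d → ℝ := fun i => (u i - projK K u i) / Real.sqrt (γ i) with hbb
        have hab : ∀ i : Fin d, w i * (u - projK K u) i = a i * bb i := by
          intro i
          have hγi : Real.sqrt (γ i) ≠ 0 := ne_of_gt (Real.sqrt_pos.mpr (hγpos i))
          show w i * (u i - projK K u i)
            = (w i * Real.sqrt (γ i)) * ((u i - projK K u i) / Real.sqrt (γ i))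
          field_simp
        have hA : ∑ i, a i ^ 2 = ∑ i, γ i * w i ^ 2 := by
          refine Finset.sum_congr rfl fun i _ => ?_
          rw [ha]
          rw [mul_pow, Real.sq_sqrt (hγpos i).le]
          ring
        have hB : ∑ i, bb i ^ 2 ≤ 1 := by
          have heq : ∑ i, bb i ^ 2 = ∑ i, (u i - projK K u i) ^ 2 / γ i := by
            refine Finset.sum_congr rfl fun i _ => ?_
            rw [hbb]
            rw [div_pow, Real.sq_sqrt (hγpos i).le]
          rw [heq]
          exact hγbd u hu
        calc ∑ i, w i * (u - projK K u) i = ∑ i, a i * bb i :=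
              Finset.sum_congr rfl fun i _ => hab i
          _ ≤ Real.sqrt ((∑ i, a i ^ 2) * ∑ i, bb i ^ 2) :=
              Real.le_sqrt_of_sq_le (Finset.sum_mul_sq_le_sq_mul_sq Finset.univ a bb)
          _ = Real.sqrt (∑ i, a i ^ 2) * Real.sqrt (∑ i, bb i ^ 2) :=
              Real.sqrt_mul (by positivity) _
          _ ≤ Real.sqrt (∑ i, a i ^ 2) * 1 :=
              mul_le_mul_of_nonneg_left (Real.sqrt_le_one.mpr hB) (Real.sqrt_nonneg _)
          _ = Real.sqrt (∑ i, γ i * w i ^ 2) := by rw [mul_one, hA]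
      calc ⟪w, u⟫ = ⟪w, projK K u⟫ + ⟪w, u - projK K u⟫ := hdec
        _ ≤ δ * ‖projK K w‖ + Real.sqrt (∑ i, γ i * w i ^ 2) := add_le_add h1 h2
        _ = g w := rfl
    have hsup : ∀ w, (⨆ u ∈ S, ⟪w, u⟫) ≤ g w := fun w =>
      Real.iSup_le (fun u => Real.iSup_le (fun hu => hpt w u hu) (hg0 w)) (hg0 w)
    have hfnonneg : ∀ w, (0:ℝ) ≤ ⨆ u ∈ S, ⟪w, u⟫ := by
      intro w
      have hbdd : BddAbove (Set.range fun u => ⨆ _ : u ∈ S, ⟪w, u⟫) := by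
        refine ⟨g w, ?_⟩
        rintro y ⟨u, rfl⟩
        exact Real.iSup_le (fun hu => hpt w u hu) (hg0 w)
      have h0 : (0:ℝ) ≤ ⨆ _ : (0 : EuclideanSpace ℝ (Fin d)) ∈ S,
          ⟪w, (0 : EuclideanSpace ℝ (Fin d))⟫ := by
        rw [ciSup_pos h0S]
        simp
      exact h0.trans (le_ciSup hbdd _)
    -- measure-theoretic part
    have hmap : stdGaussian d
        = (GKAux.nu d).map (MeasurableEquiv.toLp 2 (Fin d → ℝ)) := rfl
    set e : EuclideanSpace ℝ (Fin d) ≃ᵐ (Fin d → ℝ) := (MeasurableEquiv.toLp 2 (Fin d → ℝ)).symm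
    set b := stdOrthonormalBasis ℝ K with hb
    set A : (Fin d → ℝ) → ℝ := fun x => ‖projK K (e.symm x)‖ with hA
    set B : (Fin d → ℝ) → ℝ := fun x => Real.sqrt (∑ i, γ i * x i ^ 2) with hB
    have hAmeas : Measurable A := by
      have hc : Continuous fun v : EuclideanSpace ℝ (Fin d) => ‖projK K v‖ :=
        ((K.orthogonalProjectionOnto).continuous.subtype_val).norm
      exact hc.measurable.comp e.symm.measurable
    have hA_sq_eq : ∀ x, A x ^ 2 = ∑ j : Fin (Module.finrank ℝ K),
        (∑ i, ((b j : EuclideanSpace ℝ (Fin d)) i) * x i) ^ 2 := by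
      intro x
      rw [hA]
      rw [GKAux.proj_norm_sq_expansion]
      refine Finset.sum_congr rfl fun j _ => ?_
      rw [GKAux.real_inner_sum]
      rfl
    have hAint2 : Integrable (fun x => A x ^ 2) (GKAux.nu d) := by
      have h : Integrable (fun x : Fin d → ℝ => ∑ j : Fin (Module.finrank ℝ K),
          (∑ i, ((b j : EuclideanSpace ℝ (Fin d)) i) * x i) ^ 2) (GKAux.nu d) :=
        integrable_finset_sum _ fun j _ => GKAux.integrable_lin_sq _
      exact h.congr (Filter.Eventually.of_forall fun x => (hA_sq_eq x).symm)
    have hAval2 : ∫ x, A x ^ 2 ∂(GKAux.nu d) = (k : ℝ) := by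
      rw [integral_congr_ae (Filter.Eventually.of_forall hA_sq_eq)]
      rw [integral_finset_sum _ fun j _ => GKAux.integrable_lin_sq _]
      have hone : ∀ j : Fin (Module.finrank ℝ K),
          ∫ x, (∑ i, ((b j : EuclideanSpace ℝ (Fin d)) i) * x i) ^ 2 ∂(GKAux.nu d)
            = 1 := by
        intro j
        rw [GKAux.integral_lin_sq]
        have : ∑ i, ((b j : EuclideanSpace ℝ (Fin d)) i) ^ 2
            = ‖(b j : EuclideanSpace ℝ (Fin d))‖ ^ 2 := (GKAux.euc_norm_sq _).symm
        rw [this, ← Submodule.coe_norm, b.orthonormal.1 j]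
        norm_num
      simp_rw [hone]
      simp [hK]
    have hBmeas : Measurable B := by
      have hsum : Measurable fun x : Fin d → ℝ => ∑ i, γ i * x i ^ 2 :=
        Finset.measurable_sum _ fun i _ =>
          by fun_prop
      exact Real.continuous_sqrt.measurable.comp hsum
    have hBsq : ∀ x : Fin d → ℝ, B x ^ 2 = ∑ i, γ i * x i ^ 2 := by
      intro x
      rw [hB]
      exact Real.sq_sqrt (Finset.sum_nonneg fun i _ =>
        mul_nonneg (hγpos i).le (sq_nonneg _))
    have hBint2 : Integrable (fun x => B x ^ 2) (GKAux.nu d) := by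
      have h : Integrable (fun x : Fin d → ℝ => ∑ i, γ i * x i ^ 2) (GKAux.nu d) :=
        integrable_finset_sum _ fun i _ => (GKAux.integrable_coord_sq i).const_mul _
      exact h.congr (Filter.Eventually.of_forall fun x => (hBsq x).symm)
    have hBval2 : ∫ x, B x ^ 2 ∂(GKAux.nu d) = ∑ i, γ i := by
      rw [integral_congr_ae (Filter.Eventually.of_forall hBsq)]
      rw [integral_finset_sum _ fun i _ => (GKAux.integrable_coord_sq i).const_mul _]
      refine Finset.sum_congr rfl fun i _ => ?_
      rw [integral_const_mul, GKAux.integral_coord_sq, mul_one]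
    have hAint : Integrable A (GKAux.nu d) := GKAux.integrable_of_sq hAmeas hAint2
    have hBint : Integrable B (GKAux.nu d) := GKAux.integrable_of_sq hBmeas hBint2
    have hAbound : ∫ x, A x ∂(GKAux.nu d) ≤ Real.sqrt (k : ℝ) :=
      GKAux.integral_le_sqrt_moment hAmeas (fun x => norm_nonneg _) hAint2 hAval2
    have hBbound : ∫ x, B x ∂(GKAux.nu d) ≤ Real.sqrt (∑ i, γ i) :=
      GKAux.integral_le_sqrt_moment hBmeas (fun x => Real.sqrt_nonneg _) hBint2 hBval2
    have hgint : Integrable g (stdGaussian d) := by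
      rw [hmap, integrable_map_equiv]
      exact ((hAint.const_mul δ).add hBint :
        Integrable (fun x => δ * A x + B x) (GKAux.nu d))
    have hgval : ∫ w, g w ∂(stdGaussian d)
        = δ * (∫ x, A x ∂(GKAux.nu d)) + ∫ x, B x ∂(GKAux.nu d) := by
      rw [hmap, integral_map_equiv]
      rw [show (fun x => g (MeasurableEquiv.toLp 2 (Fin d → ℝ) x)) = fun x => δ * A x + B x from rfl]
      rw [integral_add (hAint.const_mul δ) hBint, integral_const_mul]
    calc gaussianWidth S = ∫ w, (⨆ u ∈ S, ⟪w, u⟫) ∂(stdGaussian d) := rfl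
      _ ≤ ∫ w, g w ∂(stdGaussian d) :=
          integral_mono_of_nonneg (Filter.Eventually.of_forall hfnonneg) hgint
            (Filter.Eventually.of_forall hsup)
      _ = δ * (∫ x, A x ∂(GKAux.nu d)) + ∫ x, B x ∂(GKAux.nu d) := hgval
      _ ≤ δ * Real.sqrt k + Real.sqrt (∑ i, γ i) := by
          have := mul_le_mul_of_nonneg_left hAbound hδ.le
          linarith [hBbound]
  -- conclude via the infimum
  have hne : ((fun γ : Fin d → ℝ => Real.sqrt (∑ i, γ i)) '' Gam μ θs δ K).Nonempty :=
    ⟨_, ⟨_, hγ0, rfl⟩⟩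
  have hlb : gaussianWidth S - δ * Real.sqrt k
      ≤ sInf ((fun γ : Fin d → ℝ => Real.sqrt (∑ i, γ i)) '' Gam μ θs δ K) := by
    refine le_csInf hne ?_
    rintro y ⟨γ, hγ, rfl⟩
    linarith [key γ hγ]
  linarith
end
end

section
/- There exist universal constants c_ℓ > 0 and c > 0 such that for every θ* ∈ E and every δ with 0 < δ < min{ c·Φ^{−1}((‖θ*‖_E^{−1} − 1)²), √μ₁ }, the localized Gaussian width satisfies G(E_{θ*} ∩ B(δ)) ≥ c_ℓ·δ·√(1 − ‖θ*‖_E²)·√(k(θ*, δ)). -/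
open MeasureTheory ProbabilityTheory Metric Set Filter
open scoped BigOperators ENNReal NNReal RealInnerProductSpace Classical

noncomputable section

open GaussKol

namespace GKAux
open GaussKol

def γ1 : Measure ℝ := gaussianReal 0 1

instance : IsProbabilityMeasure γ1 := by
  rw [γ1]; infer_instance

lemma integrable_abs_g : Integrable (fun x => |x|) γ1 := by
  have h1 : (1 : ℝ≥0) ≠ 0 := one_ne_zero
  rw [γ1, gaussianReal_of_var_ne_zero _ h1]
  rw [integrable_withDensity_iff (measurable_gaussianPDF _ _)]
  · have hint : Integrable (fun x : ℝ => |x * Real.exp (-(2:ℝ)⁻¹ * x ^ 2)|) volume :=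
      (integrable_mul_exp_neg_mul_sq (by norm_num : (0:ℝ) < 2⁻¹)).abs
    refine (hint.const_mul ((Real.sqrt (2 * Real.pi))⁻¹)).mono'
      ?_ ?_
    · refine (measurable_abs.mul (measurable_gaussianPDF 0 1).ennreal_toReal).aestronglyMeasurable
    · refine ae_of_all _ fun x => ?_
      have hpdf : ((gaussianPDF 0 1 x).toReal) = gaussianPDFReal 0 1 x := by
        rw [gaussianPDF]
        exact ENNReal.toReal_ofReal (gaussianPDFReal_nonneg _ _ _)
      rw [Real.norm_eq_abs, abs_mul, abs_abs, hpdf]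
      rw [gaussianPDFReal]
      simp only [NNReal.coe_one, mul_one, sub_zero]
      rw [abs_of_nonneg (by positivity : (0:ℝ) ≤ (Real.sqrt (2 * Real.pi))⁻¹ * Real.exp (-x^2/(2:ℝ)))]
      rw [abs_mul, abs_of_nonneg (Real.exp_pos _).le]
      ring_nf
      nlinarith [abs_nonneg x, Real.exp_pos (-(2:ℝ)⁻¹ * x^2), Real.sqrt_nonneg (2*Real.pi)]
  · exact ae_of_all _ fun x => ENNReal.ofReal_lt_top


lemma integrable_relu (ε : ℝ) : Integrable (fun x => max 0 (ε * x)) γ1 := by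
  refine (integrable_abs_g.const_mul |ε|).mono' ?_ (ae_of_all _ fun x => ?_)
  · exact ((continuous_const.max (continuous_const.mul continuous_id)).measurable).aestronglyMeasurable
  · rw [Real.norm_eq_abs, abs_of_nonneg (le_max_left _ _)]
    rcases le_or_gt (ε * x) 0 with h | h
    · simpa [max_eq_left h] using mul_nonneg (abs_nonneg ε) (abs_nonneg x)
    · rw [max_eq_right h.le, ← abs_mul]
      exact le_abs_self _

def I0 : ℝ := ∫ x, max 0 x ∂γ1

lemma I0_pos : 0 < I0 := by
  have hint : Integrable (fun x => max 0 x) γ1 := by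
    simpa using integrable_relu 1
  have hnn : 0 ≤ fun x : ℝ => max 0 x := fun x => le_max_left _ _
  rcases lt_or_eq_of_le (integral_nonneg hnn : 0 ≤ I0) with h | h
  · exact h
  exfalso
  have hz : (fun x : ℝ => max 0 x) =ᵐ[γ1] 0 :=
    (integral_eq_zero_iff_of_nonneg hnn hint).mp h.symm
  have hsub : Ioi (0:ℝ) ⊆ {x | (fun x : ℝ => max 0 x) x ≠ 0} := by
    intro x hx
    simp only [mem_setOf_eq, ne_eq]
    rw [max_eq_right (le_of_lt hx)]
    exact ne_of_gt hx
  have h0 : γ1 (Ioi 0) = 0 := measure_mono_null hsub hz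
  have habs : (volume : Measure ℝ) ≪ γ1 := gaussianReal_absolutelyContinuous' 0 one_ne_zero
  have : (volume : Measure ℝ) (Ioi 0) = 0 := habs h0
  simp [Real.volume_Ioi] at this

lemma map_neg_g : γ1.map (fun x => -x) = γ1 := by
  have := gaussianReal_map_const_mul (μ := 0) (v := 1) (-1)
  simp only [neg_one_mul, mul_zero] at this
  rw [γ1, this]
  congr 1
  ext
  norm_num

lemma integral_relu_eq (ε : ℝ) (hε : ε = 1 ∨ ε = -1) :
    ∫ x, max 0 (ε * x) ∂γ1 = I0 := by
  rcases hε with rfl | rfl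
  · simp [I0]
  · have hmeas : Measurable fun x : ℝ => -x := measurable_neg
    have hf : AEStronglyMeasurable (fun x : ℝ => max 0 x) (γ1.map (fun x => -x)) := by
      rw [map_neg_g]
      exact ((continuous_const.max continuous_id).measurable).aestronglyMeasurable
    have := integral_map hmeas.aemeasurable hf
    rw [map_neg_g] at this
    simp only [neg_one_mul]
    rw [I0, ← this]


lemma pi_map_eval (d : ℕ) (j : Fin d) :
    (Measure.pi fun _ : Fin d => γ1).map (Function.eval j) = γ1 := by
  ext s hs
  rw [Measure.map_apply (measurable_pi_apply j) hs]
  have hpre : Function.eval j ⁻¹' s =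
      Set.pi Set.univ (Function.update (fun _ : Fin d => (Set.univ : Set ℝ)) j s) := by
    ext x
    simp only [Set.mem_preimage, Set.mem_univ_pi, Function.update_apply]
    constructor
    · intro hx i
      by_cases hi : i = j
      · subst hi; simpa using hx
      · simp [hi]
    · intro h
      have := h j
      simpa using this
  rw [hpre, Measure.pi_pi]
  rw [Finset.prod_eq_single j (fun i _ hi => by simp [Function.update_apply, hi])
    (fun h => absurd (Finset.mem_univ j) h)]
  simp

instance stdGaussian_prob (d : ℕ) : IsProbabilityMeasure (stdGaussian d) :=
  Measure.isProbabilityMeasure_map (MeasurableEquiv.measurable _).aemeasurable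

lemma integral_coord (d : ℕ) (j : Fin d) (f : ℝ → ℝ) (hf : Measurable f) :
    ∫ w, f (w j) ∂(stdGaussian d) = ∫ x, f x ∂γ1 := by
  rw [GaussKol.stdGaussian, integral_map_equiv]
  have h1 : ∀ x : Fin d → ℝ, ((MeasurableEquiv.toLp 2 (Fin d → ℝ)) x) j = x j :=
    fun x => rfl
  simp_rw [h1]
  have h2 := integral_map (μ := Measure.pi fun _ : Fin d => γ1)
    (φ := Function.eval j) (measurable_pi_apply j).aemeasurable (f := f)
    (by rw [pi_map_eval]; exact hf.aestronglyMeasurable)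
  rw [pi_map_eval] at h2
  exact h2.symm

lemma integrable_coord (d : ℕ) (j : Fin d) (f : ℝ → ℝ) (hf : Measurable f)
    (hint : Integrable f γ1) : Integrable (fun w => f (w j)) (stdGaussian d) := by
  rw [GaussKol.stdGaussian]
  rw [(MeasurableEquiv.measurableEmbedding _).integrable_map_iff]
  have h3 := integrable_map_measure (μ := Measure.pi fun _ : Fin d => γ1)
    (f := Function.eval j) (g := f)
    (by rw [pi_map_eval]; exact hf.aestronglyMeasurable)
    (measurable_pi_apply j).aemeasurable
  rw [pi_map_eval] at h3
  exact h3.mp hint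



lemma integrable_norm (d : ℕ) :
    Integrable (fun w : EuclideanSpace ℝ (Fin d) => ‖w‖) (stdGaussian d) := by
  have hsum : Integrable (fun w : EuclideanSpace ℝ (Fin d) => ∑ j, |w j|) (stdGaussian d) :=
    integrable_finset_sum _ (fun j _ => integrable_coord d j _ measurable_abs integrable_abs_g)
  refine hsum.mono' continuous_norm.aestronglyMeasurable (ae_of_all _ fun w => ?_)
  rw [norm_norm, EuclideanSpace.norm_eq]
  have h1 : ∑ j, ‖w j‖ ^ 2 ≤ (∑ j, |w j|) ^ 2 := by
    simp_rw [Real.norm_eq_abs]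
    exact Finset.sum_sq_le_sq_sum_of_nonneg (fun i _ => abs_nonneg _)
  calc Real.sqrt (∑ j, ‖w j‖ ^ 2) ≤ Real.sqrt ((∑ j, |w j|) ^ 2) := Real.sqrt_le_sqrt h1
    _ = ∑ j, |w j| := Real.sqrt_sq (Finset.sum_nonneg fun i _ => abs_nonneg _)

section FLems
variable {d : ℕ} {S : Set (EuclideanSpace ℝ (Fin d))} {δ : ℝ}

lemma inner_le_of_mem (hS : S ⊆ closedBall 0 δ) (w : EuclideanSpace ℝ (Fin d)) {u}
    (hu : u ∈ S) : ⟪w, u⟫ ≤ ‖w‖ * δ := by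
  refine (real_inner_le_norm w u).trans ?_
  have : ‖u‖ ≤ δ := by simpa [mem_closedBall_zero_iff] using hS hu
  exact mul_le_mul_of_nonneg_left this (norm_nonneg w)

lemma bddAbove_inner (hS : S ⊆ closedBall 0 δ) (hδ : 0 ≤ δ) (w : EuclideanSpace ℝ (Fin d)) :
    BddAbove (Set.range fun u => ⨆ _ : u ∈ S, ⟪w, u⟫) := by
  refine ⟨‖w‖ * δ, forall_mem_range.2 fun u => ?_⟩
  exact Real.iSup_le (fun hu => inner_le_of_mem hS w hu) (by positivity)

lemma le_Fsup (hS : S ⊆ closedBall 0 δ) (hδ : 0 ≤ δ) (w : EuclideanSpace ℝ (Fin d)) {u}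
    (hu : u ∈ S) : ⟪w, u⟫ ≤ ⨆ u ∈ S, ⟪w, u⟫ := by
  refine le_ciSup_of_le (bddAbove_inner hS hδ w) u ?_
  rw [ciSup_pos hu]

lemma Fsup_nonneg (hS : S ⊆ closedBall 0 δ) (hδ : 0 ≤ δ) (h0 : (0:EuclideanSpace ℝ (Fin d)) ∈ S)
    (w : EuclideanSpace ℝ (Fin d)) : 0 ≤ ⨆ u ∈ S, ⟪w, u⟫ := by
  have := le_Fsup hS hδ w h0
  simpa [inner_zero_right] using this

lemma Fsup_le (hS : S ⊆ closedBall 0 δ) (hδ : 0 ≤ δ) (w : EuclideanSpace ℝ (Fin d)) :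
    (⨆ u ∈ S, ⟪w, u⟫) ≤ ‖w‖ * δ :=
  Real.iSup_le (fun u => Real.iSup_le (fun hu => inner_le_of_mem hS w hu) (by positivity))
    (by positivity)

lemma Fsup_lip (hS : S ⊆ closedBall 0 δ) (hδ : 0 ≤ δ) (h0 : (0:EuclideanSpace ℝ (Fin d)) ∈ S)
    (w w' : EuclideanSpace ℝ (Fin d)) :
    (⨆ u ∈ S, ⟪w, u⟫) ≤ (⨆ u ∈ S, ⟪w', u⟫) + ‖w - w'‖ * δ := by
  have hrhs : 0 ≤ (⨆ u ∈ S, ⟪w', u⟫) + ‖w - w'‖ * δ := by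
    have := Fsup_nonneg hS hδ h0 w'
    positivity
  refine Real.iSup_le (fun u => Real.iSup_le (fun hu => ?_) hrhs) hrhs
  have h1 : ⟪w, u⟫ = ⟪w', u⟫ + ⟪w - w', u⟫ := by rw [inner_sub_left]; ring
  rw [h1]
  exact add_le_add (le_Fsup hS hδ w' hu) (inner_le_of_mem hS (w - w') hu)

lemma Fsup_continuous (hS : S ⊆ closedBall 0 δ) (hδ : 0 ≤ δ)
    (h0 : (0:EuclideanSpace ℝ (Fin d)) ∈ S) :
    Continuous (fun w : EuclideanSpace ℝ (Fin d) => ⨆ u ∈ S, ⟪w, u⟫) := by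
  have : LipschitzWith δ.toNNReal (fun w : EuclideanSpace ℝ (Fin d) => ⨆ u ∈ S, ⟪w, u⟫) := by
    refine LipschitzWith.of_dist_le_mul fun w w' => ?_
    rw [Real.dist_eq, dist_eq_norm, Real.coe_toNNReal δ hδ]
    rw [abs_sub_le_iff]
    constructor
    · have := Fsup_lip hS hδ h0 w w'
      linarith [this]
    · have := Fsup_lip hS hδ h0 w' w
      rw [norm_sub_rev] at this
      linarith [this]
  exact this.continuous

lemma integrable_Fsup (hS : S ⊆ closedBall 0 δ) (hδ : 0 ≤ δ)
    (h0 : (0:EuclideanSpace ℝ (Fin d)) ∈ S) :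
    Integrable (fun w : EuclideanSpace ℝ (Fin d) => ⨆ u ∈ S, ⟪w, u⟫) (stdGaussian d) := by
  refine ((integrable_norm d).mul_const δ).mono'
    (Fsup_continuous hS hδ h0).aestronglyMeasurable (ae_of_all _ fun w => ?_)
  rw [Real.norm_eq_abs, abs_of_nonneg (Fsup_nonneg hS hδ h0 w)]
  exact Fsup_le hS hδ w

end FLems
variable {d : ℕ} {μ : Fin d → ℝ} {θs : EuclideanSpace ℝ (Fin d)} {δ : ℝ}

/-- Tail-norm bound for ellipse members off the large-axis index set. -/
lemma tail_bound (hμpos : ∀ i, 0 < μ i) (hδ : 0 < δ) {y : EuclideanSpace ℝ (Fin d)}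
    (hy : y ∈ ellipse μ) (J : Finset (Fin d)) (hJ : ∀ i, i ∉ J → μ i ≤ (9/20*δ)^2)
    (z : EuclideanSpace ℝ (Fin d)) (hzdef : ∀ i, z i = if i ∈ J then 0 else y i) :
    ‖z‖ ≤ 9/20*δ := by
  set m : ℝ := (9/20*δ)^2 with hm
  have hmpos : 0 < m := by positivity
  rw [EuclideanSpace.norm_eq]
  have hterm : ∀ i : Fin d, ‖z i‖ ^ 2 ≤ m * (y i ^ 2 / μ i) := by
    intro i
    rw [hzdef i]
    have h2 : 0 ≤ y i ^ 2 / μ i := div_nonneg (sq_nonneg _) (hμpos i).le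
    by_cases hi : i ∈ J
    · rw [if_pos hi]
      have h3 := mul_nonneg hmpos.le h2
      simpa using h3
    · rw [if_neg hi]
      rw [Real.norm_eq_abs, sq_abs]
      have hμi := hμpos i
      have hid : y i ^ 2 / μ i * μ i = y i ^ 2 := div_mul_cancel₀ _ hμi.ne'
      nlinarith [hJ i hi, h2]
  have hsum : ∑ i, ‖z i‖ ^ 2 ≤ m := by
    calc ∑ i, ‖z i‖ ^ 2 ≤ ∑ i, m * (y i ^ 2 / μ i) := Finset.sum_le_sum fun i _ => hterm i
      _ = m * ∑ i, y i ^ 2 / μ i := by rw [Finset.mul_sum]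
      _ ≤ m * 1 := mul_le_mul_of_nonneg_left hy hmpos.le
      _ = m := mul_one m
  calc Real.sqrt (∑ i, ‖z i‖ ^ 2) ≤ Real.sqrt m := Real.sqrt_le_sqrt hsum
    _ = 9/20*δ := Real.sqrt_sq (by positivity)

lemma critDim_le_card (η : ℝ) (hμpos : ∀ i, 0 < μ i) (hθs : θs ∈ ellipse μ) (hδ : 0 < δ)
    (hd : 0 < d) (hδ2 : δ^2 < μ ⟨0, hd⟩) :
    critDim η μ θs δ ≤ (Finset.univ.filter (fun j => (9/20*δ)^2 < μ j)).card := by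
  classical
  set J : Finset (Fin d) := Finset.univ.filter (fun j => (9/20*δ)^2 < μ j) with hJdef
  set k₀ := J.card with hk₀
  -- the subspace
  set g : ↥J → EuclideanSpace ℝ (Fin d) := fun j => EuclideanSpace.single (j : Fin d) (1:ℝ)
    with hg
  have hgli : LinearIndependent ℝ g := by
    have hb := (EuclideanSpace.basisFun (Fin d) ℝ).toBasis.linearIndependent
    have h2 := hb.comp (Subtype.val : ↥J → Fin d) Subtype.val_injective
    have hfun : ((EuclideanSpace.basisFun (Fin d) ℝ).toBasis ∘ (Subtype.val : ↥J → Fin d)) = g := by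
      funext j
      simp [g, Function.comp, EuclideanSpace.basisFun_apply]
    rwa [hfun] at h2
  set K : Submodule ℝ (EuclideanSpace ℝ (Fin d)) := Submodule.span ℝ (Set.range g) with hK
  have hfr : Module.finrank ℝ K = k₀ := by
    rw [hK, finrank_span_eq_card hgli, Fintype.card_coe]
  -- membership of restricted vectors in K
  have hmemK : ∀ y : EuclideanSpace ℝ (Fin d),
      (WithLp.toLp 2 (fun i => if i ∈ J then y i else 0) : EuclideanSpace ℝ (Fin d)) ∈ K := by
    intro y
    have hrepr : (WithLp.toLp 2 (fun i => if i ∈ J then y i else 0) : EuclideanSpace ℝ (Fin d))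
        = ∑ j ∈ J.attach, y j • EuclideanSpace.single (j : Fin d) (1:ℝ) := by
      ext i
      rw [PiLp.toLp_apply, WithLp.ofLp_sum, Finset.sum_apply]
      simp only [PiLp.smul_apply, EuclideanSpace.single_apply, smul_eq_mul, mul_ite, mul_one,
        mul_zero]
      by_cases hi : i ∈ J
      · rw [if_pos hi]
        have : ∑ x ∈ J.attach, (if i = ↑x then y ↑x else 0) = y i := by
          rw [Finset.sum_eq_single (⟨i, hi⟩ : ↥J)]
          · simp
          · intro b _ hb
            rw [if_neg]
            intro h
            exact hb (Subtype.ext h.symm)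
          · intro h
            exact absurd (Finset.mem_attach _ _) h
        exact this.symm
      · rw [if_neg hi]
        refine (Finset.sum_eq_zero ?_).symm
        intro j hj
        rw [if_neg]
        intro h
        exact hi (h ▸ j.2)
    rw [hrepr]
    exact Submodule.sum_mem K fun j _ =>
      Submodule.smul_mem K _ (Submodule.subset_span ⟨j, rfl⟩)
  -- the sup bound
  have hkol : kolWidth k₀ (shiftedEllipse μ θs ∩ closedBall 0 ((1 - η) * δ)) ≤ 9/10*δ := by
    rw [kolWidth]
    have hbdd : BddBelow (Set.range fun K : {K : Submodule ℝ (EuclideanSpace ℝ (Fin d)) //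
        Module.finrank ℝ K = k₀} =>
        ⨆ θ ∈ shiftedEllipse μ θs ∩ closedBall 0 ((1 - η) * δ), ‖θ - projK K.1 θ‖) := by
      refine ⟨0, forall_mem_range.2 fun K => ?_⟩
      exact Real.iSup_nonneg fun θ => Real.iSup_nonneg fun _ => norm_nonneg _
    refine le_trans (ciInf_le hbdd ⟨K, hfr⟩) ?_
    refine Real.iSup_le (fun θ => Real.iSup_le (fun hθ => ?_) (by positivity)) (by positivity)
    obtain ⟨⟨x, hx, rfl⟩, _⟩ := hθ
    -- bound dist to projection by dist to z
    set z : EuclideanSpace ℝ (Fin d) :=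
      WithLp.toLp 2 (fun i => if i ∈ J then (x - θs) i else 0) with hz
    have hzK : z ∈ K := hmemK (x - θs)
    have hproj : ‖(x - θs) - projK K (x - θs)‖ ≤ ‖(x - θs) - z‖ := by
      rw [projK, ← Submodule.starProjection_apply, Submodule.starProjection_minimal]
      have : BddBelow (Set.range fun v : K => ‖(x - θs) - (v : EuclideanSpace ℝ (Fin d))‖) :=
        ⟨0, forall_mem_range.2 fun v => norm_nonneg _⟩
      exact ciInf_le this ⟨z, hzK⟩
    refine hproj.trans ?_
    set zx : EuclideanSpace ℝ (Fin d) := WithLp.toLp 2 (fun i => if i ∈ J then 0 else x i) with hzx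
    set zθ : EuclideanSpace ℝ (Fin d) := WithLp.toLp 2 (fun i => if i ∈ J then 0 else θs i) with hzθ
    have hsplit : (x - θs) - z = zx - zθ := by
      ext i
      simp only [PiLp.sub_apply, hz, hzx, hzθ, PiLp.toLp_apply]
      by_cases hi : i ∈ J <;> simp [hi, PiLp.sub_apply]
    rw [hsplit]
    have hJc : ∀ i, i ∉ J → μ i ≤ (9/20*δ)^2 := by
      intro i hi
      by_contra h
      exact hi (Finset.mem_filter.mpr ⟨Finset.mem_univ i, lt_of_not_ge h⟩)
    have hx1 : ‖zx‖ ≤ 9/20*δ := tail_bound hμpos hδ hx J hJc zx (fun i => rfl)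
    have hθ1 : ‖zθ‖ ≤ 9/20*δ := tail_bound hμpos hδ hθs J hJc zθ (fun i => rfl)
    calc ‖zx - zθ‖ ≤ ‖zx‖ + ‖zθ‖ := norm_sub_le _ _
      _ ≤ 9/20*δ + 9/20*δ := add_le_add hx1 hθ1
      _ = 9/10*δ := by ring
  -- k₀ bounds
  have hk₀1 : 1 ≤ k₀ := by
    have h0J : (⟨0, hd⟩ : Fin d) ∈ J := by
      refine Finset.mem_filter.mpr ⟨Finset.mem_univ _, ?_⟩
      have : (9/20*δ)^2 < δ^2 := by nlinarith
      linarith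
    exact Finset.card_pos.mpr ⟨_, h0J⟩
  have hk₀d : k₀ ≤ d := by
    calc k₀ ≤ Finset.univ.card := Finset.card_filter_le _ _
      _ = d := by simp
  refine Nat.sInf_le ⟨hk₀1, hk₀d, ?_⟩
  exact hkol


end GKAux

open GaussKol

/-- **Theorem 2 (lower bound on the localized Gaussian width).**
There exist universal constants `c_ℓ, c > 0` such that for every `θ* ∈ E` and every
`δ ∈ (0, min{c Φ⁻¹((‖θ*‖_E⁻¹ − 1)²), √μ₁})`,
`G(E_{θ*} ∩ B(δ)) ≥ c_ℓ δ √(1 − ‖θ*‖_E²) √(k(θ*, δ))`. -/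
theorem localized_gaussian_width_lower_bound (η : ℝ) (hη0 : 0 < η) (hη1 : η < 0.1) :
    ∃ cl c : ℝ, 0 < cl ∧ 0 < c ∧
      ∀ (d : ℕ) (μ : Fin d → ℝ), (∀ i, 0 < μ i) → (∀ i j : Fin d, i ≤ j → μ j ≤ μ i) →
        ∀ θs : EuclideanSpace ℝ (Fin d), θs ∈ ellipse μ →
        ∀ δ : ℝ, 0 < δ →
          (∀ hd : 0 < d, δ < Real.sqrt (μ ⟨0, hd⟩)) →
          ENNReal.ofReal δ <
            ENNReal.ofReal c *
              PhiInv η μ θs (((Real.sqrt (enormSq μ θs))⁻¹ - 1) ^ 2) →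
          cl * δ * Real.sqrt (1 - enormSq μ θs) * Real.sqrt (critDim η μ θs δ)
            ≤ gaussianWidth (shiftedEllipse μ θs ∩ closedBall 0 δ) := by
  classical
  refine ⟨9/20 * GKAux.I0, 1, by nlinarith [GKAux.I0_pos], one_pos, ?_⟩
  intro d μ hμpos hμmono θs hθs δ hδ hδsq hPhi
  clear hPhi hμmono
  have hS0le : enormSq μ θs ≤ 1 := hθs
  have hS0nn : 0 ≤ enormSq μ θs :=
    Finset.sum_nonneg fun i _ => div_nonneg (sq_nonneg _) (hμpos i).le
  set S0 : ℝ := enormSq μ θs with hS0def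
  have h1S0 : 0 ≤ 1 - S0 := by linarith
  have hSsub : shiftedEllipse μ θs ∩ closedBall 0 δ ⊆ closedBall 0 δ := inter_subset_right
  have h0mem : (0 : EuclideanSpace ℝ (Fin d)) ∈ shiftedEllipse μ θs ∩ closedBall 0 δ :=
    ⟨⟨θs, hθs, sub_self θs⟩, mem_closedBall_self hδ.le⟩
  have hGW : gaussianWidth (shiftedEllipse μ θs ∩ closedBall 0 δ)
      = ∫ w, (⨆ u ∈ shiftedEllipse μ θs ∩ closedBall 0 δ, ⟪w, u⟫) ∂(stdGaussian d) := rfl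
  rcases Nat.eq_zero_or_pos d with hd0 | hd
  · subst hd0
    have hcrit : critDim η μ θs δ = 0 := by
      rw [critDim]
      convert Nat.sInf_empty
      rw [Set.eq_empty_iff_forall_notMem]
      intro k hk
      obtain ⟨h1, h2, -⟩ := hk
      omega
    rw [hcrit]
    simp only [Nat.cast_zero, Real.sqrt_zero, mul_zero]
    rw [hGW]
    exact integral_nonneg fun w => GKAux.Fsup_nonneg hSsub hδ.le h0mem w
  -- main case
  have hδ2 : δ^2 < μ ⟨0, hd⟩ := (Real.lt_sqrt hδ.le).mp (hδsq hd)
  set J : Finset (Fin d) := Finset.univ.filter (fun j => (9/20*δ)^2 < μ j) with hJdef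
  set k₀ := J.card with hk₀def
  have hmpos : (0:ℝ) < (9/20*δ)^2 := by positivity
  have hcrit_le : critDim η μ θs δ ≤ k₀ := GKAux.critDim_le_card η hμpos hθs hδ hd hδ2
  have hk₀1 : 1 ≤ k₀ := by
    have h0J : (⟨0, hd⟩ : Fin d) ∈ J := by
      refine Finset.mem_filter.mpr ⟨Finset.mem_univ _, ?_⟩
      nlinarith
    exact Finset.card_pos.mpr ⟨_, h0J⟩
  have hk₀pos : (0:ℝ) < (k₀:ℝ) := by exact_mod_cast hk₀1
  have hsqrtk₀ : 0 < Real.sqrt k₀ := Real.sqrt_pos.mpr hk₀pos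
  set ρ : ℝ := 9/20 * δ * Real.sqrt (1 - S0) with hρdef
  have hρnn : 0 ≤ ρ := by positivity
  have hρδ : ρ ≤ δ := by
    have h1 : Real.sqrt (1 - S0) ≤ 1 := Real.sqrt_le_one.mpr (by linarith)
    nlinarith [Real.sqrt_nonneg (1 - S0)]
  have hρsq : ρ^2 = (9/20*δ)^2 * (1 - S0) := by
    rw [hρdef, mul_pow, Real.sq_sqrt h1S0]
  set ε : Fin d → ℝ := fun j => if θs j ≤ 0 then 1 else -1 with hεdef
  have hεpm : ∀ j, ε j = 1 ∨ ε j = -1 := by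
    intro j
    by_cases h : θs j ≤ 0
    · left; simp [hεdef, h]
    · right; simp [hεdef, h]
  have hmeasrelu : ∀ j : Fin d, Measurable (fun x : ℝ => max 0 (ε j * x)) := fun j =>
    (continuous_const.max (continuous_const.mul continuous_id)).measurable
  have hint_each : ∀ j : Fin d, Integrable (fun w : EuclideanSpace ℝ (Fin d) =>
      max 0 (ε j * w j)) (stdGaussian d) := fun j =>
    GKAux.integrable_coord d j _ (hmeasrelu j) (GKAux.integrable_relu (ε j))
  have hint_g : Integrable (fun w : EuclideanSpace ℝ (Fin d) =>
      (ρ / Real.sqrt k₀) * ∑ j ∈ J, max 0 (ε j * w j)) (stdGaussian d) :=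
    (integrable_finset_sum J fun j _ => hint_each j).const_mul _
  have hint_F : Integrable (fun w : EuclideanSpace ℝ (Fin d) =>
      ⨆ u ∈ shiftedEllipse μ θs ∩ closedBall 0 δ, ⟪w, u⟫) (stdGaussian d) :=
    GKAux.integrable_Fsup hSsub hδ.le h0mem
  -- pointwise bound
  have hpoint : ∀ w : EuclideanSpace ℝ (Fin d),
      (ρ / Real.sqrt k₀) * ∑ j ∈ J, max 0 (ε j * w j)
        ≤ ⨆ u ∈ shiftedEllipse μ θs ∩ closedBall 0 δ, ⟪w, u⟫ := by
    intro w
    set v : EuclideanSpace ℝ (Fin d) :=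
      WithLp.toLp 2 (fun j => if j ∈ J ∧ w j * θs j ≤ 0 then w j else 0) with hvdef
    have hvj : ∀ j, v j = if j ∈ J ∧ w j * θs j ≤ 0 then w j else 0 := fun j => rfl
    have hv_sq : ∀ j, w j * v j = v j ^ 2 := by
      intro j
      rw [hvj j]
      by_cases h : j ∈ J ∧ w j * θs j ≤ 0
      · rw [if_pos h]; ring
      · rw [if_neg h]; ring
    have hvθ : ∀ j, v j * θs j ≤ 0 := by
      intro j
      rw [hvj j]
      by_cases h : j ∈ J ∧ w j * θs j ≤ 0
      · rw [if_pos h]; exact h.2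
      · rw [if_neg h]; simp
    have hvJ : ∀ j, j ∉ J → v j = 0 := by
      intro j hj
      rw [hvj j, if_neg]
      intro h
      exact hj h.1
    have hnorm2 : ‖v‖^2 = ∑ j, v j ^ 2 := by
      rw [EuclideanSpace.norm_eq, Real.sq_sqrt (Finset.sum_nonneg fun i _ => sq_nonneg _)]
      congr 1
      funext j
      rw [Real.norm_eq_abs, sq_abs]
    have hm_le_abs : ∀ j ∈ J, max 0 (ε j * w j) ≤ |v j| := by
      intro j hj
      by_cases hθj : θs j ≤ 0
      · simp only [hεdef, if_pos hθj, one_mul]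
        by_cases hw : 0 ≤ w j
        · have hcond : j ∈ J ∧ w j * θs j ≤ 0 := ⟨hj, mul_nonpos_iff.mpr (Or.inl ⟨hw, hθj⟩)⟩
          rw [hvj j, if_pos hcond]
          exact max_le (abs_nonneg _) (le_abs_self _)
        · push_neg at hw
          rw [max_eq_left hw.le]
          exact abs_nonneg _
      · push_neg at hθj
        simp only [hεdef, if_neg (not_le.mpr hθj), neg_one_mul]
        by_cases hw : w j ≤ 0
        · have hcond : j ∈ J ∧ w j * θs j ≤ 0 :=
            ⟨hj, mul_nonpos_iff.mpr (Or.inr ⟨hw, hθj.le⟩)⟩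
          rw [hvj j, if_pos hcond]
          rw [abs_of_nonpos hw]
          exact max_le (neg_nonneg.mpr hw) le_rfl
        · push_neg at hw
          rw [max_eq_left (by linarith)]
          exact abs_nonneg _
    have hCS : ∑ j ∈ J, |v j| ≤ Real.sqrt k₀ * ‖v‖ := by
      have h1 := Finset.sum_mul_sq_le_sq_mul_sq J (fun j => |v j|) (fun _ => 1)
      simp only [mul_one, one_pow, Finset.sum_const, nsmul_eq_mul, sq_abs] at h1
      have h2 : ∑ j ∈ J, v j ^ 2 ≤ ∑ j, v j ^ 2 :=
        Finset.sum_le_sum_of_subset_of_nonneg (Finset.subset_univ J)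
          (fun i _ _ => sq_nonneg _)
      have h3 : (∑ j ∈ J, |v j|)^2 ≤ (k₀:ℝ) * ‖v‖^2 := by
        rw [hnorm2]
        calc (∑ j ∈ J, |v j|)^2 ≤ (∑ j ∈ J, v j ^ 2) * (k₀:ℝ) := h1
          _ ≤ (∑ j, v j ^ 2) * (k₀:ℝ) := mul_le_mul_of_nonneg_right h2 hk₀pos.le
          _ = (k₀:ℝ) * ∑ j, v j ^ 2 := mul_comm _ _
      have h4 : 0 ≤ ∑ j ∈ J, |v j| := Finset.sum_nonneg fun i _ => abs_nonneg _
      have h5 := Real.sqrt_le_sqrt h3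
      rw [Real.sqrt_sq h4] at h5
      refine h5.trans ?_
      rw [Real.sqrt_mul hk₀pos.le, Real.sqrt_sq (norm_nonneg v)]
    have hkey : ρ * ‖v‖ ≤ ⨆ u ∈ shiftedEllipse μ θs ∩ closedBall 0 δ, ⟪w, u⟫ := by
      rcases eq_or_ne v 0 with hv0 | hv0
      · rw [hv0, norm_zero, mul_zero]
        exact GKAux.Fsup_nonneg hSsub hδ.le h0mem w
      · have hnv : 0 < ‖v‖ := norm_pos_iff.mpr hv0
        set t : ℝ := ρ / ‖v‖ with htdef
        have htnn : 0 ≤ t := div_nonneg hρnn hnv.le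
        set Δ : EuclideanSpace ℝ (Fin d) := t • v with hΔdef
        have hΔnorm : ‖Δ‖ = ρ := by
          rw [hΔdef, norm_smul, Real.norm_eq_abs, abs_of_nonneg htnn, htdef]
          exact div_mul_cancel₀ _ hnv.ne'
        have hsum3 : ∑ j, (t * v j)^2 / μ j ≤ 1 - S0 := by
          have hterm : ∀ j : Fin d, (t * v j)^2 / μ j ≤ (t * v j)^2 / ((9/20*δ)^2) := by
            intro j
            by_cases hj : j ∈ J
            · have hμj : (9/20*δ)^2 < μ j := (Finset.mem_filter.mp hj).2
              exact div_le_div_of_nonneg_left (sq_nonneg _) hmpos hμj.le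
            · rw [hvJ j hj]
              simp
          calc ∑ j, (t * v j)^2 / μ j ≤ ∑ j, (t * v j)^2 / ((9/20*δ)^2) :=
                Finset.sum_le_sum fun j _ => hterm j
            _ = (∑ j, (t * v j)^2) / ((9/20*δ)^2) := by rw [Finset.sum_div]
            _ = t^2 * (∑ j, v j ^2) / ((9/20*δ)^2) := by
                congr 1
                rw [Finset.mul_sum]
                exact Finset.sum_congr rfl fun j _ => by ring
            _ = t^2 * ‖v‖^2 / ((9/20*δ)^2) := by rw [hnorm2]
            _ = ρ^2 / ((9/20*δ)^2) := by
                congr 1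
                rw [htdef, div_pow, div_mul_cancel₀ _ (pow_ne_zero 2 hnv.ne')]
            _ = 1 - S0 := by rw [hρsq]; exact mul_div_cancel_left₀ _ hmpos.ne'
        have hellipse : θs + Δ ∈ ellipse μ := by
          show ∑ j, (θs + Δ) j ^ 2 / μ j ≤ 1
          have hexp : ∀ j : Fin d, (θs + Δ) j ^ 2 / μ j
              = θs j ^2 / μ j + 2 * (t * (v j * θs j)) / μ j + (t * v j)^2 / μ j := by
            intro j
            rw [PiLp.add_apply, hΔdef, PiLp.smul_apply, smul_eq_mul]
            ring
          rw [Finset.sum_congr rfl fun j _ => hexp j, Finset.sum_add_distrib,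
            Finset.sum_add_distrib]
          have hmid : ∑ j, 2 * (t * (v j * θs j)) / μ j ≤ 0 := by
            refine Finset.sum_nonpos fun j _ => ?_
            apply div_nonpos_of_nonpos_of_nonneg _ (hμpos j).le
            have := mul_nonneg htnn (neg_nonneg.mpr (hvθ j))
            nlinarith [hvθ j, htnn]
          have hfirst : ∑ j, θs j ^2 / μ j = S0 := rfl
          linarith [hsum3, hmid]
        have hΔS : Δ ∈ shiftedEllipse μ θs ∩ closedBall 0 δ := by
          constructor
          · exact ⟨θs + Δ, hellipse, add_sub_cancel_left θs Δ⟩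
          · rw [mem_closedBall_zero_iff, hΔnorm]
            exact hρδ
        have hinner : ⟪w, Δ⟫ = ρ * ‖v‖ := by
          rw [hΔdef, real_inner_smul_right]
          have hip : ⟪w, v⟫ = ∑ j, w j * v j := by
            rw [PiLp.inner_apply]
            exact Finset.sum_congr rfl fun j _ => by
              rw [RCLike.inner_apply, conj_trivial, mul_comm]
          rw [hip]
          rw [Finset.sum_congr rfl fun j _ => hv_sq j, ← hnorm2, htdef, sq, ← mul_assoc,
            div_mul_cancel₀ _ hnv.ne']
        calc ρ * ‖v‖ = ⟪w, Δ⟫ := hinner.symm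
          _ ≤ _ := GKAux.le_Fsup hSsub hδ.le w hΔS
    calc (ρ / Real.sqrt k₀) * ∑ j ∈ J, max 0 (ε j * w j)
        ≤ (ρ / Real.sqrt k₀) * ∑ j ∈ J, |v j| :=
          mul_le_mul_of_nonneg_left (Finset.sum_le_sum hm_le_abs)
            (div_nonneg hρnn hsqrtk₀.le)
      _ ≤ (ρ / Real.sqrt k₀) * (Real.sqrt k₀ * ‖v‖) :=
          mul_le_mul_of_nonneg_left hCS (div_nonneg hρnn hsqrtk₀.le)
      _ = ρ * ‖v‖ := by
          rw [div_mul_eq_mul_div, mul_comm (Real.sqrt (k₀:ℝ)) ‖v‖, ← mul_assoc,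
            mul_div_assoc, div_self hsqrtk₀.ne', mul_one]
      _ ≤ _ := hkey
  -- integral computation
  have hcalc : ∫ w, ((ρ / Real.sqrt k₀) * ∑ j ∈ J, max 0 (ε j * w j)) ∂(stdGaussian d)
      = ρ * Real.sqrt k₀ * GKAux.I0 := by
    rw [MeasureTheory.integral_const_mul, MeasureTheory.integral_finset_sum J fun j _ => hint_each j]
    have heach : ∀ j ∈ J, (∫ w, max 0 (ε j * w j) ∂(stdGaussian d)) = GKAux.I0 := by
      intro j _
      rw [GKAux.integral_coord d j (fun x => max 0 (ε j * x)) (hmeasrelu j)]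
      exact GKAux.integral_relu_eq (ε j) (hεpm j)
    rw [Finset.sum_congr rfl heach, Finset.sum_const, nsmul_eq_mul]
    rw [div_mul_eq_mul_div, div_eq_iff hsqrtk₀.ne']
    linear_combination (-(ρ * GKAux.I0)) * Real.mul_self_sqrt hk₀pos.le
  have hmono := integral_mono_of_nonneg
    (ae_of_all _ fun w => mul_nonneg (div_nonneg hρnn hsqrtk₀.le)
      (Finset.sum_nonneg fun j _ => le_max_left _ _))
    hint_F (ae_of_all _ hpoint)
  rw [hcalc] at hmono
  rw [hGW]
  refine le_trans ?_ hmono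
  have hsq : Real.sqrt (critDim η μ θs δ) ≤ Real.sqrt k₀ :=
    Real.sqrt_le_sqrt (by exact_mod_cast hcrit_le)
  calc 9/20 * GKAux.I0 * δ * Real.sqrt (1 - S0) * Real.sqrt (critDim η μ θs δ)
      ≤ 9/20 * GKAux.I0 * δ * Real.sqrt (1 - S0) * Real.sqrt k₀ := by
        refine mul_le_mul_of_nonneg_left hsq ?_
        have := GKAux.I0_pos
        positivity
    _ = ρ * Real.sqrt k₀ * GKAux.I0 := by rw [hρdef]; ring
end
end

section
/- Let a := 1 − η with η ≤ 10^{−5}, b := 3/10, and suppose k ≥ 160, θ* ∈ E with ‖θ*‖_E < 1 and ‖θ*‖₂ > a·δ, and that θ† ∈ E, U = [u₂ … u_k] with orthonormal columns, and upper-triangular H ∈ ℝ^{(k−1)×(k−1)} satisfy properties (a)–(e) of the packing lemma. Let V be an orthogonal matrix of right singular vectors of H, set m₁ := ⌊(k−1)/8⌋, m₂ := ⌊(k−1)/4⌋ and s := ρ·(k−1)/16 for a fixed ρ ∈ (0,1). Then there exists a collection 𝒯 of s-sized subsets of {m₁, …, m₂} such that: (a) |𝒯| ≥ C(⌊(k−1)/16⌋,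 s) (binomial coefficient); and (b) for each S ∈ 𝒯 there is a sign vector z^S ∈ {−1, 0, 1}^{k−1} whose nonzero coordinates are exactly those indexed by S, such that θ^S := θ† + (b·δ/√(32s))·U·H·V·z^S belongs to E and satisfies δ² ≤ ‖θ^S − θ*‖₂² ≤ (4/(1 − ‖θ*‖_E²))·δ². -/
open MeasureTheory ProbabilityTheory Metric Set Filter
open scoped BigOperators ENNReal NNReal RealInnerProductSpace Classical

noncomputable section

open GaussKol Matrix

namespace SPaux

open GaussKol

def Bform {d : ℕ} (μ : Fin d → ℝ) (x y : EuclideanSpace ℝ (Fin d)) : ℝ :=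
  ∑ j, x j * y j / μ j

lemma enormSq_eq_B {d : ℕ} (μ : Fin d → ℝ) (x : EuclideanSpace ℝ (Fin d)) :
    enormSq μ x = Bform μ x x := by
  unfold enormSq Bform; congr 1; ext j; ring

lemma Bform_comm {d : ℕ} (μ : Fin d → ℝ) (x y : EuclideanSpace ℝ (Fin d)) :
    Bform μ x y = Bform μ y x := by
  unfold Bform; congr 1; ext j; ring

lemma Bform_add_left {d : ℕ} (μ : Fin d → ℝ) (x y z : EuclideanSpace ℝ (Fin d)) :
    Bform μ (x + y) z = Bform μ x z + Bform μ y z := by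
  unfold Bform; rw [← Finset.sum_add_distrib]; congr 1; ext j
  show (x j + y j) * z j / μ j = _; ring

lemma Bform_smul_left {d : ℕ} (μ : Fin d → ℝ) (c : ℝ) (x y : EuclideanSpace ℝ (Fin d)) :
    Bform μ (c • x) y = c * Bform μ x y := by
  unfold Bform; rw [Finset.mul_sum]; congr 1; ext j
  show (c * x j) * y j / μ j = _; ring

lemma Bform_smul_right {d : ℕ} (μ : Fin d → ℝ) (c : ℝ) (x y : EuclideanSpace ℝ (Fin d)) :
    Bform μ y (c • x) = c * Bform μ y x := by
  rw [Bform_comm, Bform_smul_left, Bform_comm μ x y]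

lemma Bform_add_right {d : ℕ} (μ : Fin d → ℝ) (x y z : EuclideanSpace ℝ (Fin d)) :
    Bform μ z (x + y) = Bform μ z x + Bform μ z y := by
  rw [Bform_comm, Bform_add_left, Bform_comm μ x z, Bform_comm μ y z]

lemma Bform_sum_left {d : ℕ} (μ : Fin d → ℝ) {ι : Type*} (s : Finset ι)
    (f : ι → EuclideanSpace ℝ (Fin d)) (y : EuclideanSpace ℝ (Fin d)) :
    Bform μ (∑ i ∈ s, f i) y = ∑ i ∈ s, Bform μ (f i) y := by
  classical
  induction s using Finset.induction with
  | empty => simp [Bform]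
  | insert _ _ h ih => rw [Finset.sum_insert h, Bform_add_left, ih, Finset.sum_insert h]

lemma Bform_sum_right {d : ℕ} (μ : Fin d → ℝ) {ι : Type*} (s : Finset ι)
    (f : ι → EuclideanSpace ℝ (Fin d)) (y : EuclideanSpace ℝ (Fin d)) :
    Bform μ y (∑ i ∈ s, f i) = ∑ i ∈ s, Bform μ y (f i) := by
  rw [Bform_comm, Bform_sum_left]; simp [Bform_comm]

lemma enormSq_add {d : ℕ} (μ : Fin d → ℝ) (x y : EuclideanSpace ℝ (Fin d)) :
    enormSq μ (x + y) = enormSq μ x + 2 * Bform μ x y + enormSq μ y := by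
  rw [enormSq_eq_B, Bform_add_left, Bform_add_right, Bform_add_right, ← enormSq_eq_B,
    ← enormSq_eq_B, Bform_comm μ y x]; ring

lemma enormSq_smul {d : ℕ} (μ : Fin d → ℝ) (c : ℝ) (x : EuclideanSpace ℝ (Fin d)) :
    enormSq μ (c • x) = c ^ 2 * enormSq μ x := by
  rw [enormSq_eq_B, Bform_smul_left, Bform_smul_right, ← enormSq_eq_B]; ring

lemma enormSq_add_smul {d : ℕ} (μ : Fin d → ℝ) (c : ℝ) (x y : EuclideanSpace ℝ (Fin d)) :
    enormSq μ (x + c • y)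
      = enormSq μ x + 2 * c * Bform μ x y + c ^ 2 * enormSq μ y := by
  rw [enormSq_add, Bform_smul_right, enormSq_smul]; ring

lemma enormSq_nonneg {d : ℕ} {μ : Fin d → ℝ} (hμ : ∀ i, 0 < μ i)
    (x : EuclideanSpace ℝ (Fin d)) : 0 ≤ enormSq μ x := by
  apply Finset.sum_nonneg; intro j _
  exact div_nonneg (sq_nonneg _) (hμ j).le

/-- Greedy sign choice: quadratic form of a signed sum bounded by the sum of forms. -/
lemma sign_choice {d n : ℕ} {μ : Fin d → ℝ} (hμ : ∀ i, 0 < μ i)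
    (S : Finset (Fin n)) (x : Fin n → EuclideanSpace ℝ (Fin d)) :
    ∃ ε : Fin n → ℝ, (∀ i, ε i = 1 ∨ ε i = -1) ∧
      enormSq μ (∑ i ∈ S, ε i • x i) ≤ ∑ i ∈ S, enormSq μ (x i) := by
  classical
  induction S using Finset.induction with
  | empty => exact ⟨fun _ => 1, fun _ => Or.inl rfl, by simp [enormSq]⟩
  | @insert a S ha ih =>
    obtain ⟨ε, hε1, hεB⟩ := ih
    set y := ∑ i ∈ S, ε i • x i with hy
    set σ : ℝ := if Bform μ y (x a) ≤ 0 then 1 else -1 with hσ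
    refine ⟨Function.update ε a σ, ?_, ?_⟩
    · intro i
      by_cases h : i = a
      · subst h; rw [Function.update_self]
        by_cases h2 : Bform μ y (x i) ≤ 0
        · left; rw [hσ, if_pos h2]
        · right; rw [hσ, if_neg h2]
      · rw [Function.update_of_ne h]; exact hε1 i
    · rw [Finset.sum_insert ha]
      have hrest : ∑ i ∈ S, Function.update ε a σ i • x i = y := by
        rw [hy]; apply Finset.sum_congr rfl; intro i hi
        rw [Function.update_of_ne (by rintro rfl; exact ha hi)]
      rw [hrest, Function.update_self]
      have hexp : enormSq μ (σ • x a + y)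
          = σ ^ 2 * enormSq μ (x a) + 2 * (σ * Bform μ y (x a)) + enormSq μ y := by
        rw [enormSq_add, enormSq_smul, Bform_comm μ (σ • x a) y, Bform_smul_right]
      have hσ2 : σ ^ 2 = 1 := by
        by_cases h2 : Bform μ y (x a) ≤ 0
        · rw [hσ, if_pos h2]; norm_num
        · rw [hσ, if_neg h2]; norm_num
      have hcross : σ * Bform μ y (x a) ≤ 0 := by
        by_cases h2 : Bform μ y (x a) ≤ 0
        · rw [hσ, if_pos h2]; linarith
        · rw [hσ, if_neg h2]; linarith [not_le.mp h2]
      rw [Finset.sum_insert ha, hexp, hσ2]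
      nlinarith [enormSq_nonneg hμ (x a)]

end SPaux

open SPaux

set_option maxHeartbeats 2000000 in
/-- **Lemma 2 (sparse perturbation lemma).**
Let `a := 1 − η` with `η ≤ 10⁻⁵`, `b := 3/10`, `k ≥ 160`, `θ* ∈ E` with `‖θ*‖_E < 1` and
`‖θ*‖₂ > a δ`, and suppose `θ† ∈ E`, `u₁` together with the orthonormal columns `u` of `U`,
and the upper-triangular `H` (with right-singular-vector matrix `V` and ordered singular
values `ν`) satisfy properties (a)–(e) of the packing lemma.  With `m₁ := ⌊(k−1)/8⌋`,
`m₂ := ⌊(k−1)/4⌋` and `s := ρ (k−1)/16` (`ρ ∈ (0,1)` fixed), there exists a collection `𝒯`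
of `s`-sized subsets of `{m₁, …, m₂}` with `|𝒯| ≥ binom(⌊(k−1)/16⌋, s)` such that for each
`S ∈ 𝒯` there is an `S`-valid sign vector `z^S` for which
`θ^S := θ† + (b δ / √(32 s)) U H V z^S` lies in `E` and satisfies
`δ² ≤ ‖θ^S − θ*‖₂² ≤ (4 / (1 − ‖θ*‖_E²)) δ²`. -/
theorem sparse_perturbation_lemma {d k : ℕ} (hk : 160 ≤ k)
    (η : ℝ) (hη0 : 0 < η) (hη1 : η ≤ 1e-5)
    (μ : Fin d → ℝ) (hμpos : ∀ i, 0 < μ i) (hμmono : ∀ i j : Fin d, i ≤ j → μ j ≤ μ i)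
    (δ : ℝ) (hδ : 0 < δ)
    (θs : EuclideanSpace ℝ (Fin d)) (hθs : θs ∈ ellipse μ)
    (hθsE : enormSq μ θs < 1) (hfar : (1 - η) * δ < ‖θs‖)
    (θd u1 : EuclideanSpace ℝ (Fin d))
    (u : Fin (k - 1) → EuclideanSpace ℝ (Fin d))
    (H V : Matrix (Fin (k - 1)) (Fin (k - 1)) ℝ)
    (ν : Fin (k - 1) → ℝ)
    (hθd : θd ∈ ellipse μ)
    (hu1 : ‖u1‖ = 1) (hu : Orthonormal ℝ u) (hu1u : ∀ j, ⟪u1, u j⟫ = 0)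
    (hH : Matrix.BlockTriangular H id) (hHdiag : ∀ i, H i i = 1)
    (hν : Antitone ν) (hν0 : ∀ t, 0 ≤ ν t) (hV : Vᵀ * V = 1)
    (hSVD : Hᵀ * H = V * Matrix.diagonal (fun t => ν t ^ 2) * Vᵀ)
    -- property (a)
    (ha : ∃ s t : ℝ, (∀ i, θd i / μ i = s * u1 i) ∧ θd - θs = t • u1)
    -- property (b)
    (hb : ‖θd - θs‖ = (1 - η) * δ)
    -- property (c)
    (hc : ∀ i, θd + (3 / 10 * δ) • ∑ j, H j i • u j ∈ ellipse μ ∧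
               θd - (3 / 10 * δ) • ∑ j, H j i • u j ∈ ellipse μ)
    -- property (d)
    (hd : enormSq μ θd ≤ enormSq μ θs)
    -- property (e)
    (he1 : ∀ t : Fin (k - 1),
      ν t ≤ (1 - η) / (3 * (3 / 10)) * Real.sqrt (((k : ℝ) - 1) / ((t : ℕ) + 1)))
    (he2 : ∀ t : Fin (k - 1), 1 ≤ (t : ℕ) →
      1 - (t : ℕ) / ((k : ℝ) - 1) -
          Real.sqrt (((1 - η) ^ 2 - 9 * (3 / 10) ^ 2) / (9 * (3 / 10) ^ 2)) ≤ ν t)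
    (ρ : ℝ) (hρ0 : 0 < ρ) (hρ1 : ρ < 1)
    (s : ℕ) (hs : (s : ℝ) = ρ * ((k : ℝ) - 1) / 16) :
    ∃ 𝒯 : Finset (Finset (Fin (k - 1))),
      -- `𝒯` consists of `s`-sized subsets of `{m₁, …, m₂}` (1-indexed coordinates)
      (∀ S ∈ 𝒯, S.card = s ∧
        ∀ i ∈ S, (k - 1) / 8 ≤ (i : ℕ) + 1 ∧ (i : ℕ) + 1 ≤ (k - 1) / 4) ∧
      -- (a): cardinality bound
      Nat.choose ((k - 1) / 16) s ≤ 𝒯.card ∧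
      -- (b): valid sign vectors with the stated properties
      (∀ S ∈ 𝒯, ∃ z : Fin (k - 1) → ℝ,
        (∀ i, z i = -1 ∨ z i = 0 ∨ z i = 1) ∧
        (∀ i, z i ≠ 0 ↔ i ∈ S) ∧
        θd + (3 / 10 * δ / Real.sqrt (32 * s)) • ∑ j, (H * V).mulVec z j • u j ∈ ellipse μ ∧
        δ ^ 2 ≤ ‖(θd + (3 / 10 * δ / Real.sqrt (32 * s)) •
            ∑ j, (H * V).mulVec z j • u j) - θs‖ ^ 2 ∧
        ‖(θd + (3 / 10 * δ / Real.sqrt (32 * s)) •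
            ∑ j, (H * V).mulVec z j • u j) - θs‖ ^ 2
          ≤ 4 / (1 - enormSq μ θs) * δ ^ 2) := by
  classical
  -- basic facts about numbers
  have hk1 : 1 ≤ k := by omega
  have hkK : ((k - 1 : ℕ) : ℝ) = (k : ℝ) - 1 := by
    rw [Nat.cast_sub hk1, Nat.cast_one]
  have hKpos : (0 : ℝ) < (k : ℝ) - 1 := by
    have : (160 : ℝ) ≤ (k : ℝ) := by exact_mod_cast hk
    linarith
  have hspos : 0 < s := by
    have h : (0 : ℝ) < (s : ℝ) := by
      rw [hs]
      apply div_pos (mul_pos hρ0 hKpos) (by norm_num)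
    exact_mod_cast h
  have hsR : (0:ℝ) < (s:ℝ) := by exact_mod_cast hspos
  have hδ2 : (0 : ℝ) < (3 / 10 * δ) ^ 2 := by positivity
  have heθd : enormSq μ θd ≤ 1 := hθd
  set g : ℝ := 1 - enormSq μ θd with hgdef
  have hg0 : 0 ≤ g := by simp only [hgdef]; linarith only [heθd]
  obtain ⟨s0, t0, ha1, ha2⟩ := ha
  -- M-orthogonality of θd to the u's
  have hBθdu : ∀ l, Bform μ θd (u l) = 0 := by
    intro l
    have hcalc : Bform μ θd (u l) = s0 * ∑ p, u1 p * u l p := by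
      unfold Bform
      rw [Finset.mul_sum]
      apply Finset.sum_congr rfl
      intro p _
      calc θd p * u l p / μ p = (θd p / μ p) * u l p := by ring
        _ = (s0 * u1 p) * u l p := by rw [ha1 p]
        _ = s0 * (u1 p * u l p) := by ring
    have hiz : ∑ p, u1 p * u l p = 0 := by
      have := hu1u l
      simpa [PiLp.inner_apply, RCLike.inner_apply, conj_trivial, mul_comm] using this
    rw [hcalc, hiz, mul_zero]
  -- the column bound from property (c)
  have hwj : ∀ j, enormSq μ (∑ l, H l j • u l) ≤ g / (3 / 10 * δ) ^ 2 := by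
    intro j
    obtain ⟨hp, hm⟩ := hc j
    have hp' : enormSq μ (θd + (3 / 10 * δ) • ∑ l, H l j • u l) ≤ 1 := hp
    have hm' : enormSq μ (θd + (-(3 / 10 * δ)) • ∑ l, H l j • u l) ≤ 1 := by
      rw [neg_smul, ← sub_eq_add_neg]; exact hm
    rw [enormSq_add_smul] at hp' hm'
    rw [le_div_iff₀ hδ2, hgdef]
    linarith only [hp', hm']
  -- expansion of the quadratic form on linear combinations
  have hexpand : ∀ c : Fin (k-1) → ℝ, enormSq μ (∑ l, c l • u l)
      = ∑ l, ∑ m, c l * c m * Bform μ (u l) (u m) := by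
    intro c
    rw [enormSq_eq_B, Bform_sum_left]
    apply Finset.sum_congr rfl; intro l _
    rw [Bform_smul_left, Bform_sum_right, Finset.mul_sum]
    apply Finset.sum_congr rfl; intro m _
    rw [Bform_smul_right]; ring
  have hcolsum : ∀ A : Matrix (Fin (k-1)) (Fin (k-1)) ℝ,
      ∑ i, enormSq μ (∑ l, A l i • u l)
        = ∑ l, ∑ m, (A * Aᵀ) l m * Bform μ (u l) (u m) := by
    intro A
    simp_rw [hexpand]
    rw [Finset.sum_comm]
    apply Finset.sum_congr rfl; intro l _
    rw [Finset.sum_comm]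
    apply Finset.sum_congr rfl; intro m _
    rw [Matrix.mul_apply, Finset.sum_mul]
    apply Finset.sum_congr rfl; intro i _
    rw [Matrix.transpose_apply]
  have hVVt : V * Vᵀ = 1 := mul_eq_one_comm.mp hV
  have hHVt : (H * V) * (H * V)ᵀ = H * Hᵀ := by
    rw [Matrix.transpose_mul, Matrix.mul_assoc, ← Matrix.mul_assoc V Vᵀ Hᵀ, hVVt,
      Matrix.one_mul]
  set D : Fin (k-1) → ℝ := fun i => enormSq μ (∑ l, (H * V) l i • u l) with hD
  have hDnn : ∀ i, 0 ≤ D i := fun i => enormSq_nonneg hμpos _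
  have hsumD : ∑ i, D i ≤ ((k : ℝ) - 1) * (g / (3 / 10 * δ) ^ 2) := by
    have htr : ∑ i, D i = ∑ j, enormSq μ (∑ l, H l j • u l) := by
      rw [hD, hcolsum (H * V), hcolsum H, hHVt]
    rw [htr]
    calc ∑ j, enormSq μ (∑ l, H l j • u l)
        ≤ ∑ _j : Fin (k-1), g / (3 / 10 * δ) ^ 2 := Finset.sum_le_sum fun j _ => hwj j
      _ = ((k : ℝ) - 1) * (g / (3 / 10 * δ) ^ 2) := by
          rw [Finset.sum_const, Finset.card_univ, Fintype.card_fin, nsmul_eq_mul, hkK]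
  set Tv : ℝ := 16 * (g / (3 / 10 * δ) ^ 2) with hTv
  set bad : Finset (Fin (k-1)) := Finset.univ.filter (fun i => Tv < D i) with hbad
  have hbadcard : 16 * bad.card ≤ k - 1 := by
    rcases eq_or_lt_of_le hg0 with hgz | hgpos
    · have hTz : Tv = 0 := by rw [hTv, ← hgz]; simp
      have hDz : ∀ i, D i ≤ 0 := by
        intro i
        have hle := Finset.single_le_sum (f := D) (fun i _ => hDnn i) (Finset.mem_univ i)
        have h0 : ((k : ℝ) - 1) * (g / (3 / 10 * δ) ^ 2) = 0 := by rw [← hgz]; simp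
        linarith only [hsumD, hle, h0]
      have : bad = ∅ := by
        rw [hbad]
        apply Finset.filter_false_of_mem
        intro i _
        rw [hTz]
        exact not_lt.mpr (hDz i)
      rw [this]; simp
    · have hTpos : 0 < Tv := by
        rw [hTv]
        have hdp := div_pos hgpos hδ2
        linarith only [hdp]
      have h1 : (bad.card : ℝ) * Tv ≤ ∑ i, D i := by
        calc (bad.card : ℝ) * Tv = ∑ _i ∈ bad, Tv := by
              rw [Finset.sum_const, nsmul_eq_mul]
          _ ≤ ∑ i ∈ bad, D i :=
              Finset.sum_le_sum fun i hi => (Finset.mem_filter.mp hi).2.le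
          _ ≤ ∑ i, D i :=
              Finset.sum_le_sum_of_subset_of_nonneg (Finset.subset_univ _)
                (fun i _ _ => hDnn i)
      have h2 : ((k : ℝ) - 1) * (g / (3 / 10 * δ) ^ 2) = (((k : ℝ) - 1) / 16) * Tv := by
        rw [hTv]; ring
      have h3 : (bad.card : ℝ) ≤ ((k : ℝ) - 1) / 16 :=
        le_of_mul_le_mul_right (by linarith only [hsumD, h1, h2]) hTpos
      have h4 : ((16 * bad.card : ℕ) : ℝ) ≤ ((k - 1 : ℕ) : ℝ) := by
        push_cast
        rw [hkK]
        linarith only [h3]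
      exact_mod_cast h4
  -- the index window
  have hRmem : ∀ x ∈ Finset.Icc ((k-1)/8 - 1) ((k-1)/4 - 1), x < k - 1 := by
    intro x hx
    rw [Finset.mem_Icc] at hx
    omega
  set R : Finset (Fin (k-1)) := Finset.attachFin (Finset.Icc ((k-1)/8 - 1) ((k-1)/4 - 1)) hRmem
    with hR
  have hRcard : R.card = (k-1)/4 - (k-1)/8 + 1 := by
    rw [hR, Finset.card_attachFin, Nat.card_Icc]
    omega
  set good : Finset (Fin (k-1)) := R.filter (fun i => D i ≤ Tv) with hgoodd
  have hgoodR : ∀ i ∈ good, ((k-1)/8 ≤ (i:ℕ)+1 ∧ (i:ℕ)+1 ≤ (k-1)/4) ∧ D i ≤ Tv := by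
    intro i hi
    rw [hgoodd, Finset.mem_filter] at hi
    obtain ⟨hiR, hiD⟩ := hi
    rw [hR, Finset.mem_attachFin, Finset.mem_Icc] at hiR
    exact ⟨by omega, hiD⟩
  have hgoodcard : (k-1)/16 ≤ good.card := by
    have hsub : R ⊆ good ∪ bad := by
      intro i hi
      rw [Finset.mem_union]
      by_cases hD : D i ≤ Tv
      · left; rw [hgoodd, Finset.mem_filter]; exact ⟨hi, hD⟩
      · right; rw [hbad, Finset.mem_filter]; exact ⟨Finset.mem_univ i, not_le.mp hD⟩
    have hcards : R.card ≤ good.card + bad.card :=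
      le_trans (Finset.card_le_card hsub) (Finset.card_union_le _ _)
    omega
  -- the collection
  refine ⟨Finset.powersetCard s good, ?_, ?_, ?_⟩
  · intro S hS
    rw [Finset.mem_powersetCard] at hS
    exact ⟨hS.2, fun i hi => (hgoodR i (hS.1 hi)).1⟩
  · rw [Finset.card_powersetCard]
    exact Nat.choose_le_choose s hgoodcard
  · intro S hS
    rw [Finset.mem_powersetCard] at hS
    obtain ⟨hSsub, hScard⟩ := hS
    obtain ⟨ε, hε1, hεB⟩ := sign_choice hμpos S (fun i => ∑ l, (H * V) l i • u l)
    set z : Fin (k-1) → ℝ := fun i => if i ∈ S then ε i else 0 with hz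
    have hz1 : ∀ i ∈ S, z i = ε i := by intro i hi; rw [hz]; simp [hi]
    have hz0 : ∀ i, i ∉ S → z i = 0 := by intro i hi; rw [hz]; simp [hi]
    -- the perturbation vector equals the signed sum of columns
    have hpert : ∑ l, (H * V).mulVec z l • u l
        = ∑ i ∈ S, ε i • (∑ l, (H * V) l i • u l) := by
      calc ∑ l, (H * V).mulVec z l • u l
          = ∑ l, ∑ i, (z i * (H * V) l i) • u l := by
            apply Finset.sum_congr rfl; intro l _
            rw [← Finset.sum_smul]
            congr 1
            rw [Matrix.mulVec, dotProduct]
            apply Finset.sum_congr rfl; intro i _; ring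
        _ = ∑ i, ∑ l, (z i * (H * V) l i) • u l := Finset.sum_comm
        _ = ∑ i, z i • ∑ l, (H * V) l i • u l := by
            apply Finset.sum_congr rfl; intro i _
            rw [Finset.smul_sum]
            apply Finset.sum_congr rfl; intro l _
            rw [smul_smul]
        _ = ∑ i ∈ S, ε i • ∑ l, (H * V) l i • u l := by
            rw [← Finset.sum_subset (Finset.subset_univ S)
              (fun i _ hiS => by rw [hz0 i hiS, zero_smul])]
            apply Finset.sum_congr rfl
            intro i hi
            rw [hz1 i hi]
    -- squared euclidean length of coefficients
    have hMtM : (H * V)ᵀ * (H * V) = Matrix.diagonal (fun t => ν t ^ 2) := by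
      rw [Matrix.transpose_mul, Matrix.mul_assoc Vᵀ Hᵀ (H * V), ← Matrix.mul_assoc Hᵀ H V,
        hSVD]
      rw [show V * Matrix.diagonal (fun t => ν t ^ 2) * Vᵀ * V
          = V * (Matrix.diagonal (fun t => ν t ^ 2) * (Vᵀ * V)) from by
        simp only [Matrix.mul_assoc]]
      rw [hV, Matrix.mul_one, ← Matrix.mul_assoc, hV, Matrix.one_mul]
    have hzsq : ∀ i, ν i ^ 2 * z i * z i = if i ∈ S then ν i ^ 2 else 0 := by
      intro i
      by_cases hi : i ∈ S
      · rw [if_pos hi, hz1 i hi]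
        rcases hε1 i with h | h <;> rw [h] <;> ring
      · rw [if_neg hi, hz0 i hi, mul_zero]
    have hPnormsq : ∑ l, ((H * V).mulVec z l) ^ 2 = ∑ i ∈ S, ν i ^ 2 := by
      have h1 : ∑ l, ((H * V).mulVec z l) ^ 2
          = ((H * V).mulVec z) ⬝ᵥ ((H * V).mulVec z) := by
        rw [dotProduct]
        apply Finset.sum_congr rfl; intro l _; ring
      rw [h1, Matrix.dotProduct_mulVec, ← Matrix.mulVec_transpose,
        Matrix.mulVec_mulVec, hMtM]
      rw [dotProduct]
      calc ∑ i, (Matrix.diagonal (fun t => ν t ^ 2)).mulVec z i * z i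
          = ∑ i, ν i ^ 2 * z i * z i := by
            apply Finset.sum_congr rfl; intro i _
            rw [Matrix.mulVec_diagonal]
        _ = ∑ i, if i ∈ S then ν i ^ 2 else 0 := by
            apply Finset.sum_congr rfl; intro i _; rw [hzsq]
        _ = ∑ i ∈ S, ν i ^ 2 := by rw [Finset.sum_ite_mem, Finset.univ_inter]
    set P : EuclideanSpace ℝ (Fin d) := ∑ l, (H * V).mulVec z l • u l with hP
    set c' : ℝ := 3 / 10 * δ / Real.sqrt (32 * s) with hc'
    have hcsq : c' ^ 2 = (3 / 10 * δ) ^ 2 / (32 * s) := by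
      rw [hc', div_pow, Real.sq_sqrt (by positivity)]
    -- norm of P
    have hunorm : ‖P‖ ^ 2 = ∑ i ∈ S, ν i ^ 2 := by
      rw [hP, ← real_inner_self_eq_norm_sq, hu.inner_sum]
      simp only [conj_trivial]
      rw [← hPnormsq]
      apply Finset.sum_congr rfl; intro l _; ring
    -- inner product of θd - θs with P vanishes
    have hinnerzero : ⟪θd - θs, P⟫ = 0 := by
      rw [ha2, real_inner_smul_left, hP, inner_sum]
      have : ∀ l ∈ Finset.univ, ⟪u1, (H * V).mulVec z l • u l⟫ = 0 := by
        intro l _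
        rw [real_inner_smul_right, hu1u l, mul_zero]
      rw [Finset.sum_congr rfl this, Finset.sum_const_zero, mul_zero]
    -- membership bounds for indices in S
    have hiS : ∀ i ∈ S, (k-1)/8 ≤ (i:ℕ)+1 ∧ (i:ℕ)+1 ≤ (k-1)/4 :=
      fun i hi => (hgoodR i (hSsub hi)).1
    have hνlow : ∀ i ∈ S, (2656/10000 : ℝ) ≤ ν i := by
      intro i hi
      obtain ⟨h1, h2⟩ := hiS i hi
      have hi1 : 1 ≤ (i : ℕ) := by omega
      have he2i := he2 i hi1
      have hfrac : ((i : ℕ) : ℝ) / ((k : ℝ) - 1) ≤ 1/4 := by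
        rw [div_le_iff₀ hKpos]
        have h4 : 4 * ((i:ℕ)+1) ≤ k - 1 := by omega
        have h4' : ((4 * ((i:ℕ)+1) : ℕ) : ℝ) ≤ ((k - 1 : ℕ) : ℝ) := by exact_mod_cast h4
        rw [hkK] at h4'
        push_cast at h4'
        linarith only [h4']
      have hsqb : Real.sqrt (((1-η)^2 - 9*(3/10)^2)/(9*(3/10)^2)) ≤ 4844/10000 := by
        have harg : ((1-η)^2 - 9*(3/10)^2)/(9*(3/10)^2) ≤ (4844/10000 : ℝ)^2 := by
          rw [div_le_iff₀ (by norm_num)]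
          have t : (0:ℝ) ≤ η * (2 - η) := mul_nonneg hη0.le (by linarith only [hη1])
          nlinarith only [t]
        calc Real.sqrt (((1-η)^2 - 9*(3/10)^2)/(9*(3/10)^2))
            ≤ Real.sqrt ((4844/10000 : ℝ)^2) := Real.sqrt_le_sqrt harg
          _ = 4844/10000 := Real.sqrt_sq (by norm_num)
      linarith only [he2i, hfrac, hsqb]
    have hνlowsq : ∀ i ∈ S, (2656/10000 : ℝ)^2 ≤ ν i ^ 2 := fun i hi =>
      pow_le_pow_left₀ (by norm_num) (hνlow i hi) 2
    have hνupsq : ∀ i ∈ S, ν i ^ 2 ≤ (10/9 : ℝ)^2 * (159/19) := by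
      intro i hi
      obtain ⟨h1, h2⟩ := hiS i hi
      have hkfrac : ((k : ℝ) - 1) / (((i:ℕ) : ℝ) + 1) ≤ 159/19 := by
        rw [div_le_div_iff₀ (by positivity) (by norm_num)]
        have h8 : 152 * (k - 1) ≤ 1272 * ((i:ℕ) + 1) := by omega
        have h8' : ((152 * (k-1) : ℕ) : ℝ) ≤ ((1272 * ((i:ℕ)+1) : ℕ) : ℝ) := by
          exact_mod_cast h8
        push_cast [hkK] at h8'
        push_cast
        linarith only [h8']
      have hsqb : Real.sqrt (((k : ℝ) - 1) / (((i:ℕ) : ℝ) + 1))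
          ≤ Real.sqrt (159/19) := Real.sqrt_le_sqrt hkfrac
      have hb1 := he1 i
      have h1η : (1-η)/(3*(3/10)) ≤ 10/9 := by
        rw [div_le_iff₀ (by norm_num)]
        linarith only [hη0]
      have hν' : ν i ≤ (10/9) * Real.sqrt (159/19) := by
        calc ν i ≤ (1-η)/(3*(3/10)) * Real.sqrt (((k : ℝ) - 1)/(((i:ℕ) : ℝ)+1)) := hb1
          _ ≤ (10/9) * Real.sqrt (159/19) := by
              apply mul_le_mul h1η hsqb (Real.sqrt_nonneg _) (by norm_num)
      have hsq19 : Real.sqrt (159/19 : ℝ) ^ 2 = 159/19 := Real.sq_sqrt (by norm_num)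
      calc ν i ^ 2 ≤ ((10/9) * Real.sqrt (159/19)) ^ 2 := pow_le_pow_left₀ (hν0 i) hν' 2
        _ = (10/9 : ℝ)^2 * (159/19) := by rw [mul_pow, hsq19]
    have hsumlow : (s : ℝ) * (2656/10000)^2 ≤ ∑ i ∈ S, ν i ^ 2 := by
      calc (s : ℝ) * (2656/10000)^2 = ∑ _i ∈ S, (2656/10000 : ℝ)^2 := by
            rw [Finset.sum_const, hScard, nsmul_eq_mul]
        _ ≤ ∑ i ∈ S, ν i ^ 2 := Finset.sum_le_sum hνlowsq
    have hsumup : ∑ i ∈ S, ν i ^ 2 ≤ (s : ℝ) * ((10/9)^2 * (159/19)) := by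
      calc ∑ i ∈ S, ν i ^ 2 ≤ ∑ _i ∈ S, (10/9 : ℝ)^2 * (159/19) :=
            Finset.sum_le_sum hνupsq
        _ = (s : ℝ) * ((10/9)^2 * (159/19)) := by
            rw [Finset.sum_const, hScard, nsmul_eq_mul]
    -- the norm decomposition
    have hdec : (θd + c' • P) - θs = (θd - θs) + c' • P := by abel
    have hsp : ‖c' • P‖ ^ 2 = c'^2 * ‖P‖^2 := by
      rw [norm_smul, mul_pow, Real.norm_eq_abs, sq_abs]
    have hnormsq : ‖(θd + c' • P) - θs‖ ^ 2
        = ((1-η)*δ)^2 + c'^2 * ∑ i ∈ S, ν i ^ 2 := by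
      rw [hdec, norm_add_sq_real, real_inner_smul_right, hinnerzero, mul_zero, hb,
        hsp, hunorm]
      ring
    -- ellipse membership
    have hepert : enormSq μ P ≤ (s : ℝ) * Tv := by
      rw [hpert]
      calc enormSq μ (∑ i ∈ S, ε i • (∑ l, (H * V) l i • u l))
          ≤ ∑ i ∈ S, enormSq μ (∑ l, (H * V) l i • u l) := hεB
        _ ≤ ∑ _i ∈ S, Tv := Finset.sum_le_sum fun i hi => (hgoodR i (hSsub hi)).2
        _ = (s : ℝ) * Tv := by rw [Finset.sum_const, hScard, nsmul_eq_mul]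
    have hmem : enormSq μ (θd + c' • P) ≤ 1 := by
      rw [enormSq_add_smul]
      have hB0 : Bform μ θd P = 0 := by
        rw [hP, Bform_sum_right]
        apply Finset.sum_eq_zero
        intro l _
        rw [Bform_smul_right, hBθdu l, mul_zero]
      rw [hB0, mul_zero]
      have h5 : c'^2 * enormSq μ P ≤ c'^2 * ((s : ℝ) * Tv) :=
        mul_le_mul_of_nonneg_left hepert (sq_nonneg c')
      have h6 : c'^2 * ((s : ℝ) * Tv) = g / 2 := by
        rw [hcsq, hTv]
        field_simp
        ring
      linarith only [h5, h6, hg0, hgdef, heθd]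
    -- final numeric bounds
    have hlowQ : (3/10*δ)^2 * (2656/10000)^2 / 32 ≤ c'^2 * ∑ i ∈ S, ν i ^ 2 := by
      have h1 : c'^2 * ((s : ℝ) * (2656/10000)^2) ≤ c'^2 * ∑ i ∈ S, ν i ^ 2 :=
        mul_le_mul_of_nonneg_left hsumlow (sq_nonneg c')
      have h2 : c'^2 * ((s : ℝ) * (2656/10000)^2) = (3/10*δ)^2 * (2656/10000)^2 / 32 := by
        rw [hcsq]; field_simp
      linarith
    have hupQ : c'^2 * ∑ i ∈ S, ν i ^ 2 ≤ (3/10*δ)^2 * ((10/9)^2 * (159/19)) / 32 := by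
      have h1 : c'^2 * ∑ i ∈ S, ν i ^ 2 ≤ c'^2 * ((s : ℝ) * ((10/9)^2 * (159/19))) :=
        mul_le_mul_of_nonneg_left hsumup (sq_nonneg c')
      have h2 : c'^2 * ((s : ℝ) * ((10/9)^2 * (159/19)))
          = (3/10*δ)^2 * ((10/9)^2 * (159/19)) / 32 := by
        rw [hcsq]; field_simp
      linarith
    have hEs0 : 0 ≤ enormSq μ θs := enormSq_nonneg hμpos θs
    have hEs1 : 0 < 1 - enormSq μ θs := by linarith only [hθsE]
    refine ⟨z, ?_, ?_, hmem, ?_, ?_⟩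
    · intro i
      by_cases hi : i ∈ S
      · rw [hz1 i hi]
        rcases hε1 i with h | h
        · right; right; exact h
        · left; exact h
      · right; left; exact hz0 i hi
    · intro i
      constructor
      · intro hne
        by_contra hi
        exact hne (hz0 i hi)
      · intro hi
        rw [hz1 i hi]
        rcases hε1 i with h | h <;> rw [h] <;> norm_num
    · rw [hnormsq]
      have e1 : (1 - 2*(1/100000 : ℝ)) * δ^2 ≤ ((1-η)*δ)^2 := by
        nlinarith only [mul_nonneg (sq_nonneg η) (sq_nonneg δ),
          mul_le_mul_of_nonneg_right hη1 (sq_nonneg δ)]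
      have e2 : δ^2 ≤ (1 - 2*(1/100000 : ℝ)) * δ^2 + (3/10*δ)^2 * (2656/10000)^2 / 32 := by
        linarith only [sq_nonneg δ]
      linarith only [hlowQ, e1, e2]
    · rw [hnormsq]
      have h4 : (4:ℝ) * δ^2 ≤ 4 / (1 - enormSq μ θs) * δ^2 := by
        apply mul_le_mul_of_nonneg_right _ (sq_nonneg δ)
        rw [le_div_iff₀ hEs1]
        linarith only [hEs0]
      have u1 : ((1-η)*δ)^2 ≤ δ^2 := by
        nlinarith only [mul_nonneg (mul_nonneg hη0.le
          (show (0:ℝ) ≤ 2 - η by linarith only [hη1])) (sq_nonneg δ)]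
      linarith only [hupQ, u1, h4, sq_nonneg δ]
end
end

section
/- Let s ≥ 1 and let 𝒱 := {v ∈ ℝ^s : v_i = ±1/√s for every i}. For every k-dimensional linear subspace W ⊆ ℝ^s with 0 ≤ k ≤ s, there exists v ∈ 𝒱 such that ‖v − Π_W(v)‖₂² ≥ 1 − k/s, where Π_W is the orthogonal projection onto W. Consequently, the Kolmogorov k-width of the ℓ∞-ball B_∞(1/√s) := {v ∈ ℝ^s : |v_i| ≤ 1/√s for all i} satisfies W_k(B_∞(1/√s)) ≥ 1 − k/s. -/
open MeasureTheory ProbabilityTheory Metric Set Filter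
open scoped BigOperators ENNReal NNReal RealInnerProductSpace Classical

noncomputable section

open GaussKol


namespace KolAux

def sgn (b : Bool) : ℝ := if b then 1 else -1

lemma sgn_mul_self (b : Bool) : sgn b * sgn b = 1 := by cases b <;> simp [sgn]

lemma sum_sgn_mul {s : ℕ} {i j : Fin s} (hij : i ≠ j) :
    ∑ ε : Fin s → Bool, sgn (ε i) * sgn (ε j) = 0 := by
  refine Finset.sum_ninvolution (fun ε => Function.update ε i (!ε i)) ?_ ?_
    (fun _ => Finset.mem_univ _) ?_
  · intro ε
    have h1 : Function.update ε i (!ε i) i = !ε i := Function.update_self _ _ _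
    have h2 : Function.update ε i (!ε i) j = ε j :=
      Function.update_of_ne (Ne.symm hij) _ _
    rw [h1, h2]
    cases ε i <;> cases ε j <;> norm_num [sgn]
  · intro ε _ hc
    have := congrFun hc i
    rw [Function.update_self] at this
    cases h : ε i <;> rw [h] at this <;> simp at this
  · intro ε
    funext x
    by_cases hx : x = i
    · subst hx; simp [Function.update_self]
    · rw [Function.update_of_ne hx, Function.update_of_ne hx]

lemma sum_sq_sgn {s : ℕ} (u : Fin s → ℝ) :
    ∑ ε : Fin s → Bool, (∑ i, sgn (ε i) * u i) ^ 2 = 2 ^ s * ∑ i, u i ^ 2 := by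
  have h1 : ∀ ε : Fin s → Bool, (∑ i, sgn (ε i) * u i) ^ 2
      = ∑ i, ∑ j, (u i * u j) * (sgn (ε i) * sgn (ε j)) := by
    intro ε
    rw [sq, Finset.sum_mul_sum]
    exact Finset.sum_congr rfl fun i _ => Finset.sum_congr rfl fun j _ => by ring
  simp_rw [h1]
  rw [Finset.sum_comm]
  have h2 : ∀ i : Fin s,
      ∑ ε : Fin s → Bool, ∑ j, (u i * u j) * (sgn (ε i) * sgn (ε j))
        = 2 ^ s * u i ^ 2 := by
    intro i
    rw [Finset.sum_comm]
    have h3 : ∀ j : Fin s,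
        ∑ ε : Fin s → Bool, (u i * u j) * (sgn (ε i) * sgn (ε j))
          = if j = i then 2 ^ s * u i ^ 2 else 0 := by
      intro j
      rw [← Finset.mul_sum]
      by_cases hj : j = i
      · subst hj
        simp only [if_true]
        have : ∑ ε : Fin s → Bool, sgn (ε j) * sgn (ε j) = 2 ^ s := by
          simp only [sgn_mul_self]
          simp [Finset.card_univ]
        rw [this]; ring
      · rw [sum_sgn_mul fun h => hj h.symm, mul_zero, if_neg hj]
    simp_rw [h3]
    simp
  simp_rw [h2]
  rw [← Finset.mul_sum]

lemma normsq {n : ℕ} (x : EuclideanSpace ℝ (Fin n)) : ‖x‖ ^ 2 = ∑ i, x i ^ 2 := by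
  rw [EuclideanSpace.norm_eq, Real.sq_sqrt (by positivity)]
  simp [sq_abs]

lemma inner_eq {n : ℕ} (x y : EuclideanSpace ℝ (Fin n)) : ⟪x, y⟫ = ∑ i, x i * y i := by
  simp [PiLp.inner_apply, RCLike.inner_apply, conj_trivial]
  exact Finset.sum_congr rfl fun i _ => mul_comm _ _

lemma proj_parseval {s : ℕ} (W : Submodule ℝ (EuclideanSpace ℝ (Fin s)))
    (b : OrthonormalBasis (Fin (Module.finrank ℝ W)) ℝ W)
    (x : EuclideanSpace ℝ (Fin s)) :
    ‖projK W x‖ ^ 2 = ∑ j, (⟪((b j : EuclideanSpace ℝ (Fin s))), x⟫) ^ 2 := by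
  have h0 : ‖projK W x‖ = ‖Submodule.orthogonalProjectionOnto W x‖ := rfl
  rw [h0, ← b.repr.norm_map (Submodule.orthogonalProjectionOnto W x), normsq]
  refine Finset.sum_congr rfl fun j _ => ?_
  rw [b.repr_apply_apply, Submodule.inner_orthogonalProjectionOnto_eq_of_mem_left]

lemma part1 {s : ℕ} (hs : 1 ≤ s) (k : ℕ) (W : Submodule ℝ (EuclideanSpace ℝ (Fin s)))
    (hW : Module.finrank ℝ W = k) :
    ∃ v : EuclideanSpace ℝ (Fin s),
      (∀ i, v i = 1 / Real.sqrt s ∨ v i = -(1 / Real.sqrt s)) ∧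
      1 - (k : ℝ) / s ≤ ‖v - projK W v‖ ^ 2 := by
  have hs0 : (0:ℝ) < s := by exact_mod_cast hs
  have hsq : (0:ℝ) < Real.sqrt s := Real.sqrt_pos.mpr hs0
  have hss : Real.sqrt s * Real.sqrt s = s := Real.mul_self_sqrt hs0.le
  set b := stdOrthonormalBasis ℝ W with hb
  set V : (Fin s → Bool) → EuclideanSpace ℝ (Fin s) :=
    fun ε => (WithLp.toLp 2 (fun i => sgn (ε i) / Real.sqrt s : Fin s → ℝ) : EuclideanSpace ℝ (Fin s))
    with hVdef
  have hVapp : ∀ ε i, V ε i = sgn (ε i) / Real.sqrt s := fun ε i => rfl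
  -- inner products with V ε
  have hinner : ∀ (x : EuclideanSpace ℝ (Fin s)) (ε : Fin s → Bool),
      ⟪x, V ε⟫ = (1 / Real.sqrt s) * ∑ i, sgn (ε i) * x i := by
    intro x ε
    rw [inner_eq, Finset.mul_sum]
    refine Finset.sum_congr rfl fun i _ => ?_
    rw [hVapp]
    ring
  -- the key averaging identity
  have key : ∑ ε : Fin s → Bool, ‖projK W (V ε)‖ ^ 2 = 2 ^ s * ((k : ℝ) / s) := by
    have h1 : ∀ ε : Fin s → Bool, ‖projK W (V ε)‖ ^ 2
        = ∑ j, (⟪((b j : EuclideanSpace ℝ (Fin s))), V ε⟫) ^ 2 :=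
      fun ε => proj_parseval W b (V ε)
    simp_rw [h1]
    rw [Finset.sum_comm]
    have h2 : ∀ j : Fin (Module.finrank ℝ W),
        ∑ ε : Fin s → Bool, (⟪((b j : EuclideanSpace ℝ (Fin s))), V ε⟫) ^ 2
        = 2 ^ s * (1 / (s : ℝ)) := by
      intro j
      have h3 : ∀ ε : Fin s → Bool, (⟪((b j : EuclideanSpace ℝ (Fin s))), V ε⟫) ^ 2
          = (1 / (s : ℝ)) * (∑ i, sgn (ε i) * (b j : EuclideanSpace ℝ (Fin s)) i) ^ 2 := by
        intro ε
        rw [hinner, mul_pow, div_pow, one_pow, Real.sq_sqrt hs0.le]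
      simp_rw [h3]
      rw [← Finset.mul_sum, sum_sq_sgn]
      have hbj : ∑ i, ((b j : EuclideanSpace ℝ (Fin s)) i) ^ 2 = 1 := by
        rw [← normsq]
        have : ‖(b j : EuclideanSpace ℝ (Fin s))‖ = 1 := by
          rw [Submodule.norm_coe]
          exact b.orthonormal.1 j
        rw [this, one_pow]
      rw [hbj, mul_one]
      ring
    simp_rw [h2]
    rw [Finset.sum_const, Finset.card_univ, Fintype.card_fin, hW, nsmul_eq_mul]
    field_simp
  -- pigeonhole: some sign vector has small projection
  have hex : ∃ ε : Fin s → Bool, ‖projK W (V ε)‖ ^ 2 ≤ (k : ℝ) / s := by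
    have hsum : ∑ ε : Fin s → Bool, ‖projK W (V ε)‖ ^ 2
        ≤ ∑ _ε : Fin s → Bool, ((k : ℝ) / s) := by
      rw [key, Finset.sum_const, Finset.card_univ, nsmul_eq_mul]
      simp [Fintype.card_fun]
    obtain ⟨ε, _, hε⟩ := Finset.exists_le_of_sum_le Finset.univ_nonempty hsum
    exact ⟨ε, hε⟩
  obtain ⟨ε, hε⟩ := hex
  refine ⟨V ε, fun i => ?_, ?_⟩
  · rw [hVapp]
    cases h : ε i
    · right; simp [sgn, neg_div]
    · left; simp [sgn]
  · -- Pythagoras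
    have hsub : V ε - projK W (V ε)
        = ((Submodule.orthogonalProjectionOnto Wᗮ (V ε) : EuclideanSpace ℝ (Fin s))) := by
      have h := Submodule.starProjection_add_starProjection_orthogonal (K := W) (V ε)
      rw [projK, sub_eq_iff_eq_add']
      exact h.symm
    have hpyth := Submodule.norm_sq_eq_add_norm_sq_projection (V ε) W
    have hVnorm : ‖V ε‖ ^ 2 = 1 := by
      rw [normsq]
      have : ∀ i : Fin s, (V ε i) ^ 2 = 1 / (s : ℝ) := by
        intro i
        rw [hVapp, div_pow, sq, sgn_mul_self, sq, hss]
      simp_rw [this]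
      rw [Finset.sum_const, Finset.card_univ, Fintype.card_fin, nsmul_eq_mul]
      field_simp
    have hn1 : ‖projK W (V ε)‖ = ‖Submodule.orthogonalProjectionOnto W (V ε)‖ := rfl
    have hn2 : ‖V ε - projK W (V ε)‖ = ‖Submodule.orthogonalProjectionOnto Wᗮ (V ε)‖ := by
      rw [hsub, Submodule.norm_coe]
    rw [hn2]
    rw [hVnorm] at hpyth
    rw [hn1] at hε
    linarith

end KolAux

open KolAux in
/-- **Kolmogorov width of the `ℓ∞`-ball of radius `1/√s`.**
For every `k`-dimensional subspace `W ⊆ ℝ^s` there is a sign vector `v ∈ 𝒱` (with entries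
`±1/√s`) satisfying `‖v − Π_W v‖₂² ≥ 1 − k/s`.  Consequently
`W_k(B_∞(1/√s)) ≥ 1 − k/s`. -/
theorem kolWidth_linfty_ball_lower {s : ℕ} (hs : 1 ≤ s) :
    (∀ k : ℕ, k ≤ s → ∀ W : Submodule ℝ (EuclideanSpace ℝ (Fin s)),
      Module.finrank ℝ W = k →
      ∃ v : EuclideanSpace ℝ (Fin s),
        (∀ i, v i = 1 / Real.sqrt s ∨ v i = -(1 / Real.sqrt s)) ∧
        1 - (k : ℝ) / s ≤ ‖v - projK W v‖ ^ 2) ∧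
    (∀ k : ℕ, k ≤ s →
      1 - (k : ℝ) / s ≤
        kolWidth k {v : EuclideanSpace ℝ (Fin s) | ∀ i, |v i| ≤ 1 / Real.sqrt s}) := by
  have hs0 : (0:ℝ) < s := by exact_mod_cast hs
  have hsq : (0:ℝ) < Real.sqrt s := Real.sqrt_pos.mpr hs0
  have hss : Real.sqrt s * Real.sqrt s = s := Real.mul_self_sqrt hs0.le
  refine ⟨fun k _ W hW => part1 hs k W hW, fun k hk => ?_⟩
  set S : Set (EuclideanSpace ℝ (Fin s)) :=
    {v : EuclideanSpace ℝ (Fin s) | ∀ i, |v i| ≤ 1 / Real.sqrt s} with hS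
  -- every element of S has norm at most 1
  have hSnorm : ∀ θ ∈ S, ‖θ‖ ≤ 1 := by
    intro θ hθ
    have h1 : ‖θ‖ ^ 2 ≤ 1 := by
      rw [normsq]
      have h2 : ∀ i : Fin s, θ i ^ 2 ≤ 1 / (s : ℝ) := by
        intro i
        have := hθ i
        have h3 : θ i ^ 2 ≤ (1 / Real.sqrt s) ^ 2 := by
          rw [← sq_abs]
          exact pow_le_pow_left₀ (abs_nonneg _) this 2
        calc θ i ^ 2 ≤ (1 / Real.sqrt s) ^ 2 := h3
          _ = 1 / (s : ℝ) := by rw [div_pow, one_pow, sq, hss]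
      calc ∑ i, θ i ^ 2 ≤ ∑ _i : Fin s, 1 / (s : ℝ) := Finset.sum_le_sum fun i _ => h2 i
        _ = 1 := by
            rw [Finset.sum_const, Finset.card_univ, Fintype.card_fin, nsmul_eq_mul]
            field_simp
    nlinarith [norm_nonneg θ]
  -- a k-dimensional subspace exists
  have hKex : ∃ K : Submodule ℝ (EuclideanSpace ℝ (Fin s)), Module.finrank ℝ K = k := by
    refine ⟨Submodule.span ℝ (Set.range fun i : Fin k =>
      (EuclideanSpace.basisFun (Fin s) ℝ) (Fin.castLE hk i)), ?_⟩
    rw [finrank_span_eq_card]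
    · simp
    · exact ((EuclideanSpace.basisFun (Fin s) ℝ).toBasis.linearIndependent.comp _
        (Fin.castLE_injective hk))
  obtain ⟨K0, hK0⟩ := hKex
  haveI : Nonempty {K : Submodule ℝ (EuclideanSpace ℝ (Fin s)) //
      Module.finrank ℝ K = k} := ⟨⟨K0, hK0⟩⟩
  rw [kolWidth]
  refine le_ciInf fun K => ?_
  obtain ⟨v, hv, hv2⟩ := part1 hs k K.1 K.2
  have hvS : v ∈ S := by
    intro i
    rcases hv i with h | h <;> rw [h] <;> simp [abs_of_nonneg, le_of_lt hsq]
  -- bound on projections for elements of S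
  have hbd : ∀ θ ∈ S, ‖θ - projK K.1 θ‖ ≤ 1 := by
    intro θ hθ
    have hsub : θ - projK K.1 θ
        = ((Submodule.orthogonalProjectionOnto K.1ᗮ θ : EuclideanSpace ℝ (Fin s))) := by
      have h := Submodule.starProjection_add_starProjection_orthogonal (K := K.1) θ
      rw [projK, sub_eq_iff_eq_add']
      exact h.symm
    have hpyth := Submodule.norm_sq_eq_add_norm_sq_projection θ K.1
    have hn2 : ‖θ - projK K.1 θ‖ = ‖Submodule.orthogonalProjectionOnto K.1ᗮ θ‖ := by
      rw [hsub, Submodule.norm_coe]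
    have hθ1 : ‖θ‖ ≤ 1 := hSnorm θ hθ
    rw [hn2]
    nlinarith [norm_nonneg θ, norm_nonneg (Submodule.orthogonalProjectionOnto K.1ᗮ θ),
      norm_nonneg (Submodule.orthogonalProjectionOnto K.1 θ)]
  have hvbig : 1 - (k : ℝ) / s ≤ ‖v - projK K.1 v‖ := by
    rcases le_or_gt (1 - (k : ℝ) / s) 0 with h | h
    · exact h.trans (norm_nonneg _)
    · have hle1 : 1 - (k : ℝ) / s ≤ 1 := by
        have h9 : (0:ℝ) ≤ (k : ℝ) / s := by positivity
        linarith
      nlinarith [norm_nonneg (v - projK K.1 v)]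
  have hbdd : BddAbove (Set.range fun θ : EuclideanSpace ℝ (Fin s) =>
      ⨆ _ : θ ∈ S, ‖θ - projK K.1 θ‖) := by
    refine ⟨1, ?_⟩
    rintro x ⟨θ, rfl⟩
    by_cases hθ : θ ∈ S
    · dsimp only
      rw [ciSup_pos hθ]
      exact hbd θ hθ
    · haveI : IsEmpty (θ ∈ S) := ⟨hθ⟩
      dsimp only
      rw [Real.iSup_of_isEmpty]
      norm_num
  calc 1 - (k : ℝ) / s ≤ ⨆ _ : v ∈ S, ‖v - projK K.1 v‖ := by
        rw [ciSup_pos hvS]; exact hvbig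
    _ ≤ ⨆ θ, ⨆ _ : θ ∈ S, ‖θ - projK K.1 θ‖ := le_ciSup hbdd v
end
end

section
/- For every θ* ∈ E and every δ with 0 < δ < min{ Φ^{−1}((‖θ*‖_E^{−1} − 1)²), √μ₁ }, the critical dimensions satisfy k(θ*, δ) ≤ k(0, δ/2) + 1. -/
open MeasureTheory ProbabilityTheory Metric Set Filter
open scoped BigOperators ENNReal NNReal RealInnerProductSpace Classical

noncomputable section

open GaussKol

/-- **Lemma 5 (comparison of critical dimensions).**
For every `θ* ∈ E` and every `δ ∈ (0, min{Φ⁻¹((‖θ*‖_E⁻¹ − 1)²), √μ₁})`,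
the critical dimensions satisfy `k(θ*, δ) ≤ k(0, δ/2) + 1`. -/
theorem critDim_le_critDim_zero {d : ℕ} (η : ℝ) (hη0 : 0 < η) (hη1 : η < 0.1)
    (μ : Fin d → ℝ) (hμpos : ∀ i, 0 < μ i) (hμmono : ∀ i j : Fin d, i ≤ j → μ j ≤ μ i)
    (θs : EuclideanSpace ℝ (Fin d)) (hθs : θs ∈ ellipse μ)
    (hd : 0 < d) (δ : ℝ) (hδ : 0 < δ)
    (hδμ : δ < Real.sqrt (μ ⟨0, hd⟩))
    (hδΦ : ENNReal.ofReal δ <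
      PhiInv η μ θs (((Real.sqrt (enormSq μ θs))⁻¹ - 1) ^ 2)) :
    critDim η μ θs δ ≤ critDim η μ 0 (δ / 2) + 1 := by
  have hη1' : η < 1 := by linarith [hη1]
  set T : Set (EuclideanSpace ℝ (Fin d)) :=
    shiftedEllipse μ 0 ∩ closedBall 0 ((1 - η) * (δ / 2)) with hT
  set S : Set (EuclideanSpace ℝ (Fin d)) :=
    shiftedEllipse μ θs ∩ closedBall 0 ((1 - η) * δ) with hS
  -- residual of orthogonal projection is a contraction
  have hres : ∀ (K : Submodule ℝ (EuclideanSpace ℝ (Fin d)))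
      (x : EuclideanSpace ℝ (Fin d)), ‖x - projK K x‖ ≤ ‖x‖ := by
    intro K x
    rw [projK, ← Submodule.starProjection_apply, Submodule.starProjection_minimal]
    calc ⨅ v : K, ‖x - v‖ ≤ ‖x - ((0:K) : EuclideanSpace ℝ (Fin d))‖ :=
          ciInf_le ⟨0, by rintro _ ⟨v, rfl⟩; positivity⟩ (0:K)
      _ = ‖x‖ := by simp
  -- nonnegativity of the inner suprema
  have hsupnn : ∀ (U : Set (EuclideanSpace ℝ (Fin d)))
      (K : Submodule ℝ (EuclideanSpace ℝ (Fin d))),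
      0 ≤ ⨆ θ ∈ U, ‖θ - projK K θ‖ := fun U K =>
    Real.iSup_nonneg fun θ => Real.iSup_nonneg fun _ => norm_nonneg _
  have hbdd : ∀ (k : ℕ) (U : Set (EuclideanSpace ℝ (Fin d))),
      BddBelow (Set.range fun K : {K : Submodule ℝ (EuclideanSpace ℝ (Fin d)) //
        Module.finrank ℝ K = k} => ⨆ θ ∈ U, ‖θ - projK K.1 θ‖) := by
    intro k U
    exact ⟨0, by rintro _ ⟨K, rfl⟩; exact hsupnn U K.1⟩
  -- `d` belongs to the defining set of `critDim η μ 0 (δ/2)`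
  have hposT : (0:ℝ) ≤ 9 / 10 * (δ / 2) := by positivity
  have hdmem : d ∈ {k : ℕ | 1 ≤ k ∧ k ≤ d ∧
      kolWidth k T ≤ (9 / 10) * (δ / 2)} := by
    refine ⟨hd, le_rfl, ?_⟩
    have htop : Module.finrank ℝ (⊤ : Submodule ℝ (EuclideanSpace ℝ (Fin d))) = d := by
      simp [finrank_top]
    calc kolWidth d T ≤ ⨆ θ ∈ T, ‖θ - projK (⊤ : Submodule ℝ (EuclideanSpace ℝ (Fin d))) θ‖ :=
          ciInf_le (hbdd d T) ⟨⊤, htop⟩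
      _ ≤ 9 / 10 * (δ / 2) := by
          refine Real.iSup_le (fun θ => Real.iSup_le (fun _ => ?_) hposT) hposT
          have : projK (⊤ : Submodule ℝ (EuclideanSpace ℝ (Fin d))) θ = θ :=
            (Submodule.starProjection_apply _ _).symm.trans
              (Submodule.starProjection_eq_self_iff.mpr Submodule.mem_top)
          rw [this]; simpa using hposT
  have hne : {k : ℕ | 1 ≤ k ∧ k ≤ d ∧
      kolWidth k T ≤ (9 / 10) * (δ / 2)}.Nonempty := ⟨d, hdmem⟩
  set k₀ := critDim η μ 0 (δ / 2) with hk₀def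
  have hk₀mem : k₀ ∈ {k : ℕ | 1 ≤ k ∧ k ≤ d ∧
      kolWidth k T ≤ (9 / 10) * (δ / 2)} := Nat.sInf_mem hne
  obtain ⟨hk1, hk2, hk3⟩ := hk₀mem
  -- halving map: `Δ ∈ S → Δ/2 ∈ T`
  have hhalf : ∀ Δ ∈ S, (1/2 : ℝ) • Δ ∈ T := by
    rintro Δ ⟨hΔE, hΔB⟩
    obtain ⟨θ, hθ, rfl⟩ := hΔE
    constructor
    · refine ⟨(1/2 : ℝ) • (θ - θs), ?_, sub_zero _⟩
      have hθ' : ∑ j, θ j ^ 2 / μ j ≤ 1 := hθ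
      have hθs' : ∑ j, θs j ^ 2 / μ j ≤ 1 := hθs
      show ∑ j, ((1/2 : ℝ) • (θ - θs)) j ^ 2 / μ j ≤ 1
      have hterm : ∀ j : Fin d, ((1/2 : ℝ) • (θ - θs)) j ^ 2 / μ j
          ≤ θ j ^ 2 / μ j / 2 + θs j ^ 2 / μ j / 2 := by
        intro j
        have hμj := hμpos j
        have happ : ((1/2 : ℝ) • (θ - θs)) j = (1/2 : ℝ) * (θ j - θs j) := by
          simp [PiLp.smul_apply, PiLp.sub_apply, smul_eq_mul]
        rw [happ]
        have h2 : ((1/2 : ℝ) * (θ j - θs j)) ^ 2 ≤ (θ j ^ 2 + θs j ^ 2) / 2 := by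
          nlinarith [sq_nonneg (θ j + θs j)]
        calc ((1/2 : ℝ) * (θ j - θs j)) ^ 2 / μ j
            ≤ ((θ j ^ 2 + θs j ^ 2) / 2) / μ j := by
              gcongr
          _ = θ j ^ 2 / μ j / 2 + θs j ^ 2 / μ j / 2 := by
              ring
      calc ∑ j, ((1/2 : ℝ) • (θ - θs)) j ^ 2 / μ j
          ≤ ∑ j, (θ j ^ 2 / μ j / 2 + θs j ^ 2 / μ j / 2) :=
            Finset.sum_le_sum fun j _ => hterm j
        _ = (∑ j, θ j ^ 2 / μ j) / 2 + (∑ j, θs j ^ 2 / μ j) / 2 := by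
            rw [Finset.sum_add_distrib, Finset.sum_div, Finset.sum_div]
        _ ≤ 1 / 2 + 1 / 2 := by gcongr
        _ = 1 := by norm_num
    · rw [mem_closedBall_zero_iff] at hΔB ⊢
      rw [norm_smul]
      have : ‖(1/2 : ℝ)‖ = 1/2 := by norm_num [abs_of_pos]
      rw [this]
      nlinarith [hΔB]
  -- key bound: `kolWidth k₀ S ≤ 9/10 δ`
  have key : kolWidth k₀ S ≤ (9 / 10) * δ := by
    refine le_of_forall_pos_le_add ?_
    intro ε hε
    haveI : Nonempty {K : Submodule ℝ (EuclideanSpace ℝ (Fin d)) //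
        Module.finrank ℝ K = k₀} := by
      refine ⟨⟨Submodule.span ℝ (Set.range fun i : Fin k₀ =>
        (EuclideanSpace.basisFun (Fin d) ℝ) (Fin.castLE hk2 i)), ?_⟩⟩
      rw [finrank_span_eq_card]
      · simp
      · exact ((EuclideanSpace.basisFun (Fin d) ℝ).toBasis.linearIndependent.comp
          (Fin.castLE hk2) (Fin.castLE_injective hk2))
    have h1 : kolWidth k₀ T < 9 / 10 * (δ / 2) + ε / 2 := lt_of_le_of_lt hk3 (by linarith)
    obtain ⟨K, hK⟩ := exists_lt_of_ciInf_lt h1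
    -- bound the sup over `S` at `K`
    have hposb : (0:ℝ) ≤ 2 * (9 / 10 * (δ / 2) + ε / 2) := by positivity
    have hbT : BddAbove (Set.range fun θ : EuclideanSpace ℝ (Fin d) =>
        ⨆ (_ : θ ∈ T), ‖θ - projK K.1 θ‖) := by
      refine ⟨(1 - η) * (δ / 2), ?_⟩
      rintro _ ⟨θ, rfl⟩
      refine Real.iSup_le (fun hθ => ?_) (by nlinarith)
      calc ‖θ - projK K.1 θ‖ ≤ ‖θ‖ := hres K.1 θ
        _ ≤ (1 - η) * (δ / 2) := by
            have := hθ.2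
            rwa [mem_closedBall_zero_iff] at this
    have hsup : (⨆ θ ∈ S, ‖θ - projK K.1 θ‖) ≤ 2 * (9 / 10 * (δ / 2) + ε / 2) := by
      refine Real.iSup_le (fun Δ => Real.iSup_le (fun hΔ => ?_) hposb) hposb
      set Δ2 := (1/2 : ℝ) • Δ with hΔ2def
      have hΔ2T : Δ2 ∈ T := hhalf Δ hΔ
      have hΔeq : Δ = (2:ℝ) • Δ2 := by
        rw [hΔ2def, smul_smul]; norm_num
      have hproj : projK K.1 Δ = (2:ℝ) • projK K.1 Δ2 := by
        rw [hΔeq, projK, projK, _root_.map_smul]; rfl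
      have hnorm : ‖Δ - projK K.1 Δ‖ = 2 * ‖Δ2 - projK K.1 Δ2‖ := by
        rw [hproj]
        conv_lhs => rw [hΔeq]
        rw [← smul_sub, norm_smul]
        norm_num
      have hle1 : ‖Δ2 - projK K.1 Δ2‖ ≤ ⨆ θ ∈ T, ‖θ - projK K.1 θ‖ := by
        have heq : ‖Δ2 - projK K.1 Δ2‖ = ⨆ (_ : Δ2 ∈ T), ‖Δ2 - projK K.1 Δ2‖ := by
          haveI : Nonempty (Δ2 ∈ T) := ⟨hΔ2T⟩
          exact (ciSup_const).symm
        rw [heq]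
        exact le_ciSup hbT Δ2
      rw [hnorm]
      have : ‖Δ2 - projK K.1 Δ2‖ ≤ 9 / 10 * (δ / 2) + ε / 2 :=
        le_trans hle1 (le_of_lt hK)
      linarith
    calc kolWidth k₀ S ≤ ⨆ θ ∈ S, ‖θ - projK K.1 θ‖ := ciInf_le (hbdd k₀ S) K
      _ ≤ 2 * (9 / 10 * (δ / 2) + ε / 2) := hsup
      _ = 9 / 10 * δ + ε := by ring
  -- conclude
  have : critDim η μ θs δ ≤ k₀ := Nat.sInf_le ⟨hk1, hk2, key⟩
  exact le_trans this (Nat.le_succ k₀)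
end
end

section
/- For every r > 0 and every integer k with 1 ≤ k ≤ d − 1, the Kolmogorov k-width of the localized ellipse centered at 0 satisfies W_k(E ∩ B(r)) = min{ √(μ_{k+1}), r }; moreover W_d(E ∩ B(r)) = 0. The minimum in the definition of W_k is achieved by the orthogonal projection onto span{e₁, …, e_k}. -/
open MeasureTheory ProbabilityTheory Metric Set Filter
open scoped BigOperators ENNReal NNReal RealInnerProductSpace Classical

noncomputable section

open GaussKol

section KolAux

variable {d : ℕ}

lemma coord_eq_zero_of_mem_span {s : Set (Fin d)} {x : EuclideanSpace ℝ (Fin d)}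
    (hx : x ∈ Submodule.span ℝ
      ((fun j : Fin d => EuclideanSpace.single j (1 : ℝ)) '' s))
    {j : Fin d} (hj : j ∉ s) : x j = 0 := by
  induction hx using Submodule.span_induction with
  | mem y hy =>
      obtain ⟨i, hi, rfl⟩ := hy
      have hji : j ≠ i := by rintro rfl; exact hj hi
      simp [EuclideanSpace.single_apply, hji]
  | zero => simp
  | add a b _ _ ha hb => simp [ha, hb]
  | smul c a _ ha => simp [ha]

lemma mem_span_single_of_support {s : Set (Fin d)} {x : EuclideanSpace ℝ (Fin d)}
    (hx : ∀ j ∉ s, x j = 0) :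
    x ∈ Submodule.span ℝ
      ((fun j : Fin d => EuclideanSpace.single j (1 : ℝ)) '' s) := by
  have hrepr : x = ∑ j : Fin d, x j • EuclideanSpace.single j (1 : ℝ) := by
    ext i
    rw [show ((∑ j : Fin d, x j • EuclideanSpace.single j (1 : ℝ)) i)
        = ∑ j : Fin d, (x j • EuclideanSpace.single j (1 : ℝ)) i from
      by rw [WithLp.ofLp_sum]; exact Finset.sum_apply i Finset.univ _]
    simp [EuclideanSpace.single_apply]
  rw [hrepr]
  refine Submodule.sum_mem _ fun j _ => ?_
  by_cases hj : j ∈ s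
  · exact Submodule.smul_mem _ _ (Submodule.subset_span ⟨j, hj, rfl⟩)
  · rw [hx j hj, zero_smul]; exact Submodule.zero_mem _

lemma finrank_span_single_lt (k : ℕ) (hk : k ≤ d) :
    Module.finrank ℝ (Submodule.span ℝ
      ((fun j : Fin d => EuclideanSpace.single j (1 : ℝ)) '' {j : Fin d | (j : ℕ) < k})) = k := by
  classical
  have hon : Orthonormal ℝ (fun j : Fin d => EuclideanSpace.single j (1 : ℝ)) := by
    have h := (EuclideanSpace.basisFun (Fin d) ℝ).orthonormal
    have he : ⇑(EuclideanSpace.basisFun (Fin d) ℝ)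
        = fun j : Fin d => EuclideanSpace.single j (1 : ℝ) :=
      funext fun j => EuclideanSpace.basisFun_apply (Fin d) ℝ j
    rwa [he] at h
  set s : Set (Fin d) := {j : Fin d | (j : ℕ) < k} with hs
  have hli : LinearIndependent ℝ
      (fun j : s => EuclideanSpace.single (j : Fin d) (1 : ℝ)) :=
    hon.linearIndependent.comp _ Subtype.val_injective
  have him : Set.range (fun j : s => EuclideanSpace.single (j : Fin d) (1 : ℝ))
      = (fun j : Fin d => EuclideanSpace.single j (1 : ℝ)) '' s := by
    rw [Set.image_eq_range]
  have hcard : Fintype.card s = k := by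
    have e : s ≃ Fin k :=
      { toFun := fun j => ⟨(j : Fin d), j.2⟩
        invFun := fun i => ⟨⟨(i : ℕ), lt_of_lt_of_le i.2 hk⟩, i.2⟩
        left_inv := fun j => by ext; rfl
        right_inv := fun i => rfl }
    rw [Fintype.card_congr e, Fintype.card_fin]
  rw [← him, finrank_span_eq_card hli, hcard]

lemma norm_sub_projK_le_of_mem (K : Submodule ℝ (EuclideanSpace ℝ (Fin d)))
    (x v : EuclideanSpace ℝ (Fin d)) (hv : v ∈ K) :
    ‖x - GaussKol.projK K x‖ ≤ ‖x - v‖ := by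
  rw [GaussKol.projK, ← Submodule.starProjection_apply, Submodule.starProjection_minimal]
  exact ciInf_le ⟨0, by rintro b ⟨w, rfl⟩; positivity⟩ (⟨v, hv⟩ : K)

lemma norm_sub_projK_le (K : Submodule ℝ (EuclideanSpace ℝ (Fin d)))
    (x : EuclideanSpace ℝ (Fin d)) :
    ‖x - GaussKol.projK K x‖ ≤ ‖x‖ := by
  simpa using norm_sub_projK_le_of_mem K x 0 (Submodule.zero_mem K)

lemma euclid_normsq (x : EuclideanSpace ℝ (Fin d)) : ‖x‖ ^ 2 = ∑ j, x j ^ 2 := by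
  rw [EuclideanSpace.norm_eq, Real.sq_sqrt (by positivity)]
  simp [sq_abs]

end KolAux


/-- **Kolmogorov width of the localized ellipse at zero.**
For `1 ≤ k ≤ d − 1`, `W_k(E ∩ B(r)) = min{√μ_{k+1}, r}`, the minimum in the definition of
`W_k` being achieved by the projection onto `span{e₁, …, e_k}`; moreover
`W_d(E ∩ B(r)) = 0`. -/
theorem kolWidth_ellipse_at_zero {d : ℕ} (μ : Fin d → ℝ)
    (hμpos : ∀ i, 0 < μ i) (hμmono : ∀ i j : Fin d, i ≤ j → μ j ≤ μ i)
    (r : ℝ) (hr : 0 < r) :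
    (∀ k : ℕ, ∀ hk1 : 1 ≤ k, ∀ hk2 : k ≤ d - 1,
      kolWidth k (ellipse μ ∩ closedBall 0 r)
          = min (Real.sqrt (μ ⟨k, by omega⟩)) r ∧
      (⨆ θ ∈ ellipse μ ∩ closedBall 0 r,
          ‖θ - projK (Submodule.span ℝ
            ((fun j : Fin d => EuclideanSpace.single j (1 : ℝ)) '' {j | (j : ℕ) < k})) θ‖)
        = kolWidth k (ellipse μ ∩ closedBall 0 r)) ∧
    kolWidth d (ellipse μ ∩ closedBall 0 r) = 0 := by
  classical
  set S : Set (EuclideanSpace ℝ (Fin d)) := ellipse μ ∩ closedBall 0 r with hSdef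
  have h0S : (0 : EuclideanSpace ℝ (Fin d)) ∈ S := by
    refine ⟨?_, mem_closedBall_self hr.le⟩
    simp [ellipse]
  have hnormle : ∀ (K : Submodule ℝ (EuclideanSpace ℝ (Fin d))) θ, θ ∈ S →
      ‖θ - projK K θ‖ ≤ r :=
    fun K θ hθ => (norm_sub_projK_le K θ).trans (mem_closedBall_zero_iff.mp hθ.2)
  have hsup_le : ∀ (K : Submodule ℝ (EuclideanSpace ℝ (Fin d))) (c : ℝ), 0 ≤ c →
      (∀ θ ∈ S, ‖θ - projK K θ‖ ≤ c) → (⨆ θ ∈ S, ‖θ - projK K θ‖) ≤ c := by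
    intro K c hc h
    exact Real.iSup_le (fun θ => Real.iSup_le (fun hθ => h θ hθ) hc) hc
  have hbdd : ∀ K : Submodule ℝ (EuclideanSpace ℝ (Fin d)),
      BddAbove (Set.range fun θ => ⨆ _ : θ ∈ S, ‖θ - projK K θ‖) := by
    intro K
    refine ⟨r, ?_⟩
    rintro x ⟨θ, rfl⟩
    by_cases hθ : θ ∈ S
    · exact Real.iSup_le (fun _ => hnormle K θ hθ) hr.le
    · haveI : IsEmpty (θ ∈ S) := ⟨hθ⟩
      show (⨆ _ : θ ∈ S, ‖θ - projK K θ‖) ≤ r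
      rw [Real.iSup_of_isEmpty]
      exact hr.le
  have hle_sup : ∀ (K : Submodule ℝ (EuclideanSpace ℝ (Fin d))) θ, θ ∈ S →
      ‖θ - projK K θ‖ ≤ ⨆ θ ∈ S, ‖θ - projK K θ‖ := by
    intro K θ hθ
    refine le_trans ?_ (le_ciSup (hbdd K) θ)
    exact le_ciSup (f := fun _ : θ ∈ S => ‖θ - projK K θ‖)
      ⟨‖θ - projK K θ‖, by rintro x ⟨_, rfl⟩; exact le_rfl⟩ hθ
  have hproj0 : ∀ K : Submodule ℝ (EuclideanSpace ℝ (Fin d)), projK K 0 = 0 := by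
    intro K; simp [projK]
  have hsup_nonneg : ∀ K : Submodule ℝ (EuclideanSpace ℝ (Fin d)),
      0 ≤ ⨆ θ ∈ S, ‖θ - projK K θ‖ := by
    intro K
    have h := hle_sup K 0 h0S
    simpa [hproj0 K] using h
  have hInfBdd : ∀ m : ℕ, BddBelow (Set.range fun K :
      {K : Submodule ℝ (EuclideanSpace ℝ (Fin d)) // Module.finrank ℝ K = m} =>
      ⨆ θ ∈ S, ‖θ - projK K.1 θ‖) := by
    intro m
    exact ⟨0, by rintro x ⟨K, rfl⟩; exact hsup_nonneg K.1⟩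
  have hd : kolWidth d S = 0 := by
    have htop : Module.finrank ℝ (⊤ : Submodule ℝ (EuclideanSpace ℝ (Fin d))) = d := by
      rw [finrank_top]; exact finrank_euclideanSpace_fin
    haveI : Nonempty {K : Submodule ℝ (EuclideanSpace ℝ (Fin d)) // Module.finrank ℝ K = d} :=
      ⟨⟨⊤, htop⟩⟩
    unfold kolWidth
    refine le_antisymm ?_ (le_ciInf fun K => hsup_nonneg K.1)
    refine ciInf_le_of_le (hInfBdd d) ⟨⊤, htop⟩ ?_
    refine hsup_le _ 0 le_rfl ?_
    intro θ _
    have h := Submodule.sub_starProjection_mem_orthogonal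
      (K := (⊤ : Submodule ℝ (EuclideanSpace ℝ (Fin d)))) θ
    rw [Submodule.starProjection_apply, Submodule.top_orthogonal_eq_bot, Submodule.mem_bot] at h
    simp only [projK]
    rw [h, norm_zero]
  refine ⟨fun k hk1 hk2 => ?_, hd⟩
  have hkd : k < d := by omega
  have hk1d : k + 1 ≤ d := by omega
  set kk : Fin d := ⟨k, hkd⟩ with hkk
  set c : ℝ := min (Real.sqrt (μ kk)) r with hc
  have hc0 : 0 ≤ c := le_min (Real.sqrt_nonneg _) hr.le
  set f : Fin d → EuclideanSpace ℝ (Fin d) :=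
    fun j => EuclideanSpace.single j (1 : ℝ) with hf
  set K₀ : Submodule ℝ (EuclideanSpace ℝ (Fin d)) :=
    Submodule.span ℝ (f '' {j : Fin d | (j : ℕ) < k}) with hK₀def
  have hK₀ : Module.finrank ℝ K₀ = k := finrank_span_single_lt k hkd.le
  -- upper bound for the coordinate projection
  have hub : ∀ θ ∈ S, ‖θ - projK K₀ θ‖ ≤ c := by
    intro θ hθ
    set y : EuclideanSpace ℝ (Fin d) :=
      (WithLp.equiv 2 (∀ _ : Fin d, ℝ)).symm (fun j : Fin d => if (j : ℕ) < k then θ j else 0) with hy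
    have hyj : ∀ j : Fin d, y j = if (j : ℕ) < k then θ j else 0 := fun j => rfl
    have hymem : y ∈ K₀ := by
      refine mem_span_single_of_support fun j hj => ?_
      have hjk : ¬ ((j : ℕ) < k) := hj
      rw [hyj j, if_neg hjk]
    have hkey : ‖θ - y‖ ^ 2 = ∑ j : Fin d, (if (j : ℕ) < k then 0 else θ j) ^ 2 := by
      rw [euclid_normsq]
      refine Finset.sum_congr rfl fun j _ => ?_
      have hsub : (θ - y) j = θ j - y j := rfl
      rw [hsub, hyj j]
      by_cases h : (j : ℕ) < k <;> simp [h]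
    have hθball : ‖θ‖ ≤ r := mem_closedBall_zero_iff.mp hθ.2
    have hθell : ∑ j, θ j ^ 2 / μ j ≤ 1 := hθ.1
    have hb1 : ‖θ - y‖ ^ 2 ≤ r ^ 2 := by
      rw [hkey]
      calc ∑ j : Fin d, (if (j : ℕ) < k then 0 else θ j) ^ 2 ≤ ∑ j, θ j ^ 2 := by
            refine Finset.sum_le_sum fun j _ => ?_
            by_cases h : (j : ℕ) < k <;> simp [h, sq_nonneg]
        _ = ‖θ‖ ^ 2 := (euclid_normsq θ).symm
        _ ≤ r ^ 2 := by nlinarith [norm_nonneg θ]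
    have hb2 : ‖θ - y‖ ^ 2 ≤ μ kk := by
      rw [hkey]
      have hstep : ∀ j : Fin d, (if (j : ℕ) < k then 0 else θ j) ^ 2 ≤ μ kk * (θ j ^ 2 / μ j) := by
        intro j
        by_cases h : (j : ℕ) < k
        · rw [if_pos h]
          have h0 : (0 : ℝ) ≤ μ kk * (θ j ^ 2 / μ j) :=
            mul_nonneg (hμpos kk).le (div_nonneg (sq_nonneg _) (hμpos j).le)
          simpa using h0
        · rw [if_neg h]
          have hjk : kk ≤ j := by
            rw [Fin.le_def]
            simpa [hkk] using not_lt.mp h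
          have hμle : μ j ≤ μ kk := hμmono kk j hjk
          calc θ j ^ 2 = θ j ^ 2 / μ j * μ j := (div_mul_cancel₀ _ (hμpos j).ne').symm
            _ ≤ θ j ^ 2 / μ j * μ kk :=
                mul_le_mul_of_nonneg_left hμle (div_nonneg (sq_nonneg _) (hμpos j).le)
            _ = μ kk * (θ j ^ 2 / μ j) := mul_comm _ _
      calc ∑ j : Fin d, (if (j : ℕ) < k then 0 else θ j) ^ 2
          ≤ ∑ j, μ kk * (θ j ^ 2 / μ j) := Finset.sum_le_sum fun j _ => hstep j
        _ = μ kk * ∑ j, θ j ^ 2 / μ j := by rw [Finset.mul_sum]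
        _ ≤ μ kk * 1 := mul_le_mul_of_nonneg_left hθell (hμpos kk).le
        _ = μ kk := mul_one _
    have hyb : ‖θ - y‖ ≤ c := by
      refine le_min ?_ ?_
      · exact (Real.le_sqrt (norm_nonneg _) (hμpos kk).le).mpr hb2
      · nlinarith [norm_nonneg (θ - y)]
    exact (norm_sub_projK_le_of_mem K₀ θ y hymem).trans hyb
  -- lower bound for an arbitrary subspace of dimension k
  have hlb : ∀ K : Submodule ℝ (EuclideanSpace ℝ (Fin d)), Module.finrank ℝ K = k →
      c ≤ ⨆ θ ∈ S, ‖θ - projK K θ‖ := by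
    intro K hK
    set V : Submodule ℝ (EuclideanSpace ℝ (Fin d)) :=
      Submodule.span ℝ (f '' {j : Fin d | (j : ℕ) < k + 1}) with hVdef
    have hV : Module.finrank ℝ V = k + 1 := finrank_span_single_lt (k + 1) hk1d
    have horthK : Module.finrank ℝ Kᗮ = d - k := by
      have h1 := K.finrank_add_finrank_orthogonal
      rw [hK, finrank_euclideanSpace_fin] at h1
      omega
    have hsum := Submodule.finrank_sup_add_finrank_inf_eq V Kᗮ
    have hsuple : Module.finrank ℝ ↥(V ⊔ Kᗮ) ≤ d := by
      have h2 := Submodule.finrank_le (V ⊔ Kᗮ)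
      rwa [finrank_euclideanSpace_fin] at h2
    have hpos : 0 < Module.finrank ℝ ↥(V ⊓ Kᗮ) := by
      rw [hV, horthK] at hsum
      omega
    obtain ⟨v, hv0⟩ := Module.finrank_pos_iff_exists_ne_zero.mp hpos
    have hvV : (v : EuclideanSpace ℝ (Fin d)) ∈ V := (Submodule.mem_inf.mp v.2).1
    have hvK : (v : EuclideanSpace ℝ (Fin d)) ∈ Kᗮ := (Submodule.mem_inf.mp v.2).2
    have hvne : (v : EuclideanSpace ℝ (Fin d)) ≠ 0 := fun h => hv0 (Subtype.ext h)
    set u : EuclideanSpace ℝ (Fin d) :=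
      ‖(v : EuclideanSpace ℝ (Fin d))‖⁻¹ • (v : EuclideanSpace ℝ (Fin d)) with hu
    have hunorm : ‖u‖ = 1 := norm_smul_inv_norm hvne
    set θ : EuclideanSpace ℝ (Fin d) := c • u with hθdef
    have hθnorm : ‖θ‖ = c := by
      rw [hθdef, norm_smul, hunorm, mul_one, Real.norm_eq_abs, abs_of_nonneg hc0]
    have hθK : θ ∈ Kᗮ := Submodule.smul_mem _ _ (Submodule.smul_mem _ _ hvK)
    have hθcoord : ∀ j : Fin d, k < (j : ℕ) → θ j = 0 := by
      intro j hj
      have hvj : (v : EuclideanSpace ℝ (Fin d)) j = 0 :=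
        coord_eq_zero_of_mem_span hvV (by simp only [Set.mem_setOf_eq]; omega)
      have happ : θ j = c * (‖(v : EuclideanSpace ℝ (Fin d))‖⁻¹ *
          (v : EuclideanSpace ℝ (Fin d)) j) := rfl
      rw [happ, hvj]
      ring
    have hθS : θ ∈ S := by
      refine ⟨?_, ?_⟩
      · simp only [ellipse, Set.mem_setOf_eq]
        have hstep : ∀ j : Fin d, θ j ^ 2 / μ j ≤ θ j ^ 2 / μ kk := by
          intro j
          by_cases hj : (j : ℕ) < k + 1
          · refine div_le_div_of_nonneg_left (sq_nonneg _) (hμpos kk) ?_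
            refine hμmono j kk ?_
            rw [Fin.le_def]
            simpa [hkk] using Nat.lt_succ_iff.mp hj
          · rw [hθcoord j (by omega)]
            simp
        calc ∑ j, θ j ^ 2 / μ j ≤ ∑ j, θ j ^ 2 / μ kk := Finset.sum_le_sum fun j _ => hstep j
          _ = (∑ j, θ j ^ 2) / μ kk := by rw [Finset.sum_div]
          _ = ‖θ‖ ^ 2 / μ kk := by rw [euclid_normsq]
          _ ≤ (Real.sqrt (μ kk)) ^ 2 / μ kk := by
              have h2 : ‖θ‖ ^ 2 ≤ (Real.sqrt (μ kk)) ^ 2 := by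
                rw [hθnorm]
                exact pow_le_pow_left₀ hc0 (min_le_left _ _) 2
              exact div_le_div_of_nonneg_right h2 (hμpos kk).le
          _ = 1 := by rw [Real.sq_sqrt (hμpos kk).le, div_self (hμpos kk).ne']
      · rw [mem_closedBall_zero_iff, hθnorm]
        exact min_le_right _ _
    have hproj : projK K θ = 0 := by
      have h0 := Submodule.orthogonalProjectionOnto_apply_of_mem_orthogonal (K := K) hθK
      rw [projK, h0]
      rfl
    have hcc : ‖θ - projK K θ‖ = c := by rw [hproj, sub_zero, hθnorm]
    calc c = ‖θ - projK K θ‖ := hcc.symm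
      _ ≤ _ := hle_sup K θ hθS
  haveI : Nonempty {K : Submodule ℝ (EuclideanSpace ℝ (Fin d)) // Module.finrank ℝ K = k} :=
    ⟨⟨K₀, hK₀⟩⟩
  have hkol : kolWidth k S = c := by
    unfold kolWidth
    refine le_antisymm ?_ (le_ciInf fun K => hlb K.1 K.2)
    exact ciInf_le_of_le (hInfBdd k) ⟨K₀, hK₀⟩ (hsup_le K₀ c hc0 hub)
  refine ⟨hkol, le_antisymm ?_ ?_⟩
  · rw [hkol]
    exact hsup_le K₀ c hc0 hub
  · unfold kolWidth
    exact ciInf_le (hInfBdd k) ⟨K₀, hK₀⟩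
end
end
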